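/- arXiv:1908.03268 — 4 statements merged into one kernel-verified Lean document; each statement's English description precedes it below -/
import Mathlib

section
/- (Pettis's theorem for groupoids) Let G be a topological groupoid such that every fiber σ⁻¹(x) and τ⁻¹(x), x ∈ G⁰, is a Baire space. Let A, B, U, V ⊆ G with U τ-fiberwise open (U ∩ τ⁻¹(x) is open in τ⁻¹(x) for every x), V σ-fiberwise open, U∖A τ-fiberwise meager (meager in each τ⁻¹(x)), and V∖B σ-fiberwise meager. Then U·V ⊆ A·B, where for subsets S, T ⊆ G, S·T denotes the set of all products g·h with g ∈ S, h ∈ T composable. -/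
open Set Topology

attribute [local instance] Classical.propDecidable

/-- A small groupoid, presented on its space of morphisms `G`, with objects
identified with unit morphisms.  `comp g h` is only meaningful when
`src g = tgt h`; its values elsewhere are irrelevant junk. -/
structure Groupoidal (G : Type*) where
  src : G → G
  tgt : G → G
  comp : G → G → G
  inv : G → G
  src_src : ∀ g, src (src g) = src g
  tgt_of_src : ∀ g, tgt (src g) = src g
  src_of_tgt : ∀ g, src (tgt g) = tgt g
  tgt_tgt : ∀ g, tgt (tgt g) = tgt g
  comp_src : ∀ g, comp g (src g) = g
  tgt_comp_self : ∀ g, comp (tgt g) g = g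
  src_comp : ∀ g h, src g = tgt h → src (comp g h) = src h
  tgt_comp : ∀ g h, src g = tgt h → tgt (comp g h) = tgt g
  comp_assoc : ∀ g h k, src g = tgt h → src h = tgt k →
    comp (comp g h) k = comp g (comp h k)
  src_inv : ∀ g, src (inv g) = tgt g
  tgt_inv : ∀ g, tgt (inv g) = src g
  comp_inv_self : ∀ g, comp g (inv g) = tgt g
  inv_comp_self : ∀ g, comp (inv g) g = src g

namespace Groupoidal

variable {G : Type*} (S : Groupoidal G)

/-- The set of objects (= unit morphisms) of the groupoid. -/
def units : Set G := {x | S.src x = x}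

/-- Two morphisms are composable when the source of the first matches the
target of the second. -/
def Composable (g h : G) : Prop := S.src g = S.tgt h

/-- Pointwise product of two subsets of a groupoid. -/
def setMul (A B : Set G) : Set G :=
  {k | ∃ g ∈ A, ∃ h ∈ B, S.Composable g h ∧ k = S.comp g h}

/-- Pointwise inverse of a subset of a groupoid. -/
def setInv (A : Set G) : Set G := S.inv '' A

def IsSymmetric (A : Set G) : Prop := S.setInv A = A

def IsUnital (A : Set G) : Prop := S.src '' A ⊆ A ∧ S.tgt '' A ⊆ A

/-- A subgroupoid: a subset closed under inverse and multiplication. -/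
def IsSubgroupoid (A : Set G) : Prop := S.IsSymmetric A ∧ S.setMul A A ⊆ A

/-- A topological groupoid: all structure maps are continuous (multiplication
on the subspace of composable pairs). -/
structure IsTopological [TopologicalSpace G] : Prop where
  continuous_src : Continuous S.src
  continuous_tgt : Continuous S.tgt
  continuous_inv : Continuous S.inv
  continuous_comp :
    Continuous fun p : {p : G × G // S.Composable p.1 p.2} => S.comp p.1.1 p.1.2

/-- An open topological groupoid: the source map is open. -/
def IsOpenGroupoid [TopologicalSpace G] : Prop := IsOpenMap S.src

/-- A non-Archimedean topological groupoid: every unit morphism has a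
neighborhood basis of open subgroupoids. -/
def IsNonArchimedean [TopologicalSpace G] : Prop :=
  ∀ x ∈ S.units, ∀ W ∈ nhds x, ∃ U : Set G,
    IsOpen U ∧ x ∈ U ∧ U ⊆ W ∧ S.IsSubgroupoid U

/-- A standard Borel groupoid structure: all structure maps are Borel. -/
structure IsBorelGroupoid [MeasurableSpace G] : Prop where
  measurable_src : Measurable S.src
  measurable_tgt : Measurable S.tgt
  measurable_inv : Measurable S.inv
  measurable_comp :
    Measurable fun p : {p : G × G // S.Composable p.1 p.2} => S.comp p.1.1 p.1.2

end Groupoidal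

/-- A `Π⁰₂` subset of a topological space: a countable intersection of sets
of the form (closed ∪ open). -/
def IsPi02 {X : Type*} [TopologicalSpace X] (A : Set X) : Prop :=
  ∃ C O : ℕ → Set X, (∀ n, IsClosed (C n)) ∧ (∀ n, IsOpen (O n)) ∧
    A = ⋂ n, C n ∪ O n

/-- A quasi-Polish space: homeomorphic to a `Π⁰₂` subspace of `𝕊^ℕ`, where
`𝕊 = Prop` is the Sierpiński space. -/
def IsQuasiPolish (X : Type*) [TopologicalSpace X] : Prop :=
  ∃ A : Set (ℕ → Prop), IsPi02 A ∧ Nonempty (X ≃ₜ ↥A)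

/-- A σ-locally Polish space: a countable cover by open Polish subspaces. -/
def IsSigmaLocallyPolish (X : Type*) [TopologicalSpace X] : Prop :=
  ∃ V : ℕ → Set X, (∀ n, IsOpen (V n)) ∧ (∀ n, PolishSpace (V n)) ∧
    (⋃ n, V n) = Set.univ

/-- A functor between groupoids presented on their spaces of morphisms. -/
structure GFunctor {G H : Type*} (S : Groupoidal G) (T : Groupoidal H) where
  toFun : G → H
  map_src : ∀ g, toFun (S.src g) = T.src (toFun g)
  map_tgt : ∀ g, toFun (S.tgt g) = T.tgt (toFun g)
  map_comp : ∀ g h, S.Composable g h →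
    toFun (S.comp g h) = T.comp (toFun g) (toFun h)

namespace GFunctor

variable {G H K : Type*} {S : Groupoidal G} {T : Groupoidal H} {R : Groupoidal K}

/-- The identity functor. -/
def id (S : Groupoidal G) : GFunctor S S :=
  ⟨fun g => g, fun _ => rfl, fun _ => rfl, fun _ _ _ => rfl⟩

/-- Composition of functors. -/
def comp (F₂ : GFunctor T R) (F₁ : GFunctor S T) : GFunctor S R where
  toFun := F₂.toFun ∘ F₁.toFun
  map_src g := by simp only [Function.comp_apply, F₁.map_src, F₂.map_src]
  map_tgt g := by simp only [Function.comp_apply, F₁.map_tgt, F₂.map_tgt]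
  map_comp g h hc := by
    have hc' : T.Composable (F₁.toFun g) (F₁.toFun h) := by
      unfold Groupoidal.Composable at hc ⊢
      rw [← F₁.map_src, ← F₁.map_tgt, hc]
    simp only [Function.comp_apply, F₁.map_comp g h hc, F₂.map_comp _ _ hc']

/-- A functor is full if it is surjective on each hom-set. -/
def Full (F : GFunctor S T) : Prop :=
  ∀ x ∈ S.units, ∀ y ∈ S.units, ∀ k : H,
    T.src k = F.toFun x → T.tgt k = F.toFun y →
      ∃ g : G, S.src g = x ∧ S.tgt g = y ∧ F.toFun g = k

/-- A functor is faithful if it is injective on each hom-set. -/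
def Faithful (F : GFunctor S T) : Prop :=
  ∀ g g' : G, S.src g = S.src g' → S.tgt g = S.tgt g' →
    F.toFun g = F.toFun g' → g = g'

end GFunctor

/-- A natural transformation (automatically an isomorphism, between functors
of groupoids); `app` is only meaningful on unit morphisms. -/
structure GNatIso {G H : Type*} {S : Groupoidal G} {T : Groupoidal H}
    (F F' : GFunctor S T) where
  app : G → H
  app_src : ∀ x ∈ S.units, T.src (app x) = F.toFun x
  app_tgt : ∀ x ∈ S.units, T.tgt (app x) = F'.toFun x
  naturality : ∀ g : G,
    T.comp (app (S.tgt g)) (F.toFun g) = T.comp (F'.toFun g) (app (S.src g))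

/-- A Borel functor which is an equivalence of groupoids witnessed by a Borel
inverse functor and Borel natural isomorphisms. -/
def IsBorelEquivalence {G H : Type*} [MeasurableSpace G] [MeasurableSpace H]
    {S : Groupoidal G} {T : Groupoidal H} (F : GFunctor S T) : Prop :=
  Measurable F.toFun ∧
  ∃ F' : GFunctor T S, Measurable F'.toFun ∧
    (∃ α : GNatIso (F.comp F') (GFunctor.id T), Measurable α.app) ∧
    (∃ β : GNatIso (F'.comp F) (GFunctor.id S), Measurable β.app)

namespace Groupoidal
variable {G : Type*} (S : Groupoidal G)

lemma inv_inv' (g : G) : S.inv (S.inv g) = g := by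
  have h1 : S.inv (S.inv g) = S.comp (S.inv (S.inv g)) (S.src g) := by
    conv_lhs => rw [← S.comp_src (S.inv (S.inv g))]
    rw [S.src_inv, S.tgt_inv]
  have hc1 : S.src (S.inv (S.inv g)) = S.tgt (S.inv g) := by
    rw [S.src_inv]
  rw [h1, ← S.inv_comp_self g,
    ← S.comp_assoc (S.inv (S.inv g)) (S.inv g) g hc1 (S.src_inv g),
    S.inv_comp_self, S.src_inv, S.tgt_comp_self]

lemma tgt_unit {x : G} (hx : S.src x = x) : S.tgt x = x := by
  conv_lhs => rw [← hx]
  rw [S.tgt_of_src, hx]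

lemma inv_unit {x : G} (hx : S.src x = x) : S.inv x = x := by
  have h2 := S.tgt_comp_self (S.inv x)
  rw [S.tgt_inv, hx] at h2
  rw [← h2, S.comp_inv_self, S.tgt_unit hx]

lemma cont_comp [TopologicalSpace G] (hTop : S.IsTopological) {α : Type*}
    [TopologicalSpace α] {f₁ f₂ : α → G} (h₁ : Continuous f₁) (h₂ : Continuous f₂)
    (hcomp : ∀ a, S.Composable (f₁ a) (f₂ a)) :
    Continuous fun a => S.comp (f₁ a) (f₂ a) :=
  hTop.continuous_comp.comp (Continuous.subtype_mk (h₁.prodMk h₂) hcomp)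

end Groupoidal

/-- **Pettis's theorem for groupoids.**  Let `G` be a topological groupoid all
of whose source and target fibers over objects are Baire spaces.  If `U` is
τ-fiberwise open, `V` is σ-fiberwise open, `U \ A` is τ-fiberwise meager and
`V \ B` is σ-fiberwise meager, then `U · V ⊆ A · B`. -/
theorem pettis_for_groupoids {G : Type*} [TopologicalSpace G]
    (S : Groupoidal G) (hTop : S.IsTopological)
    (hBaireSrc : ∀ x ∈ S.units, BaireSpace ↥(S.src ⁻¹' {x}))
    (hBaireTgt : ∀ x ∈ S.units, BaireSpace ↥(S.tgt ⁻¹' {x}))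
    (A B U V : Set G)
    (hU : ∀ x ∈ S.units,
      IsOpen ((Subtype.val : ↥(S.tgt ⁻¹' {x}) → G) ⁻¹' U))
    (hV : ∀ x ∈ S.units,
      IsOpen ((Subtype.val : ↥(S.src ⁻¹' {x}) → G) ⁻¹' V))
    (hUA : ∀ x ∈ S.units,
      IsMeagre ((Subtype.val : ↥(S.tgt ⁻¹' {x}) → G) ⁻¹' (U \ A)))
    (hVB : ∀ x ∈ S.units,
      IsMeagre ((Subtype.val : ↥(S.src ⁻¹' {x}) → G) ⁻¹' (V \ B))) :
    S.setMul U V ⊆ S.setMul A B := by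
  rintro k ⟨g, hgU, h, hhV, hc, rfl⟩
  have hc' : S.src g = S.tgt h := hc
  have hx : S.src g ∈ S.units := S.src_src g
  have hy : S.tgt g ∈ S.units := S.src_of_tgt g
  have hz : S.src h ∈ S.units := S.src_src h
  haveI : BaireSpace ↥(S.tgt ⁻¹' {S.src g}) := hBaireTgt _ hx
  have hmem : ∀ c : ↥(S.tgt ⁻¹' {S.src g}), S.tgt ↑c = S.src g := fun c => c.2
  have hmem' : ∀ d : ↥(S.tgt ⁻¹' {S.tgt g}), S.tgt ↑d = S.tgt g := fun d => d.2
  have hmem'' : ∀ d : ↥(S.src ⁻¹' {S.src h}), S.src ↑d = S.src h := fun d => d.2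
  have hcomp1 : ∀ c : ↥(S.tgt ⁻¹' {S.src g}), S.Composable g ↑c :=
    fun c => (hmem c).symm
  have hcomp1' : ∀ d : ↥(S.tgt ⁻¹' {S.tgt g}), S.Composable (S.inv g) ↑d :=
    fun d => by rw [Groupoidal.Composable, S.src_inv, hmem' d]
  have hcomp2 : ∀ c : ↥(S.tgt ⁻¹' {S.src g}), S.Composable (S.inv ↑c) h :=
    fun c => by rw [Groupoidal.Composable, S.src_inv, hmem c, hc']
  have hcomp2' : ∀ d : ↥(S.src ⁻¹' {S.src h}), S.Composable ↑d (S.inv h) :=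
    fun d => by rw [Groupoidal.Composable, S.tgt_inv, hmem'' d]
  -- first homeomorphism `c ↦ g ∘ c`
  let e₁ : ↥(S.tgt ⁻¹' {S.src g}) ≃ₜ ↥(S.tgt ⁻¹' {S.tgt g}) :=
    { toFun := fun c => ⟨S.comp g ↑c, S.tgt_comp g ↑c (hcomp1 c)⟩
      invFun := fun d => ⟨S.comp (S.inv g) ↑d, by
        show S.tgt _ = S.src g
        rw [S.tgt_comp _ _ (hcomp1' d), S.tgt_inv]⟩
      left_inv := fun c => by
        apply Subtype.ext
        show S.comp (S.inv g) (S.comp g ↑c) = ↑c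
        rw [← S.comp_assoc _ _ _ (S.src_inv g) (hcomp1 c), S.inv_comp_self]
        have h3 := S.tgt_comp_self (↑c : G)
        rw [hmem c] at h3
        exact h3
      right_inv := fun d => by
        apply Subtype.ext
        show S.comp g (S.comp (S.inv g) ↑d) = ↑d
        rw [← S.comp_assoc _ _ _ (S.tgt_inv g).symm (hcomp1' d), S.comp_inv_self]
        have h3 := S.tgt_comp_self (↑d : G)
        rw [hmem' d] at h3
        exact h3
      continuous_toFun := Continuous.subtype_mk
        (S.cont_comp hTop continuous_const continuous_subtype_val hcomp1)
        (fun c => S.tgt_comp g ↑c (hcomp1 c))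
      continuous_invFun := Continuous.subtype_mk
        (S.cont_comp hTop continuous_const continuous_subtype_val hcomp1')
        (fun d => by
          show S.tgt _ = S.src g
          rw [S.tgt_comp _ _ (hcomp1' d), S.tgt_inv]) }
  -- second homeomorphism `c ↦ c⁻¹ ∘ h`
  let e₂ : ↥(S.tgt ⁻¹' {S.src g}) ≃ₜ ↥(S.src ⁻¹' {S.src h}) :=
    { toFun := fun c => ⟨S.comp (S.inv ↑c) h, S.src_comp _ h (hcomp2 c)⟩
      invFun := fun d => ⟨S.inv (S.comp ↑d (S.inv h)), by
        show S.tgt _ = S.src g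
        rw [S.tgt_inv, S.src_comp _ _ (hcomp2' d), S.src_inv, ← hc']⟩
      left_inv := fun c => by
        apply Subtype.ext
        show S.inv (S.comp (S.comp (S.inv ↑c) h) (S.inv h)) = ↑c
        rw [S.comp_assoc _ _ _ (hcomp2 c) (S.tgt_inv h).symm, S.comp_inv_self]
        have htc : S.tgt h = S.src (S.inv ↑c) := by rw [S.src_inv, hmem c, hc']
        rw [htc, S.comp_src, S.inv_inv']
      right_inv := fun d => by
        apply Subtype.ext
        show S.comp (S.inv (S.inv (S.comp ↑d (S.inv h)))) h = ↑d
        rw [S.inv_inv', S.comp_assoc _ _ _ (hcomp2' d) (S.src_inv h),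
          S.inv_comp_self]
        have h3 := S.comp_src (↑d : G)
        rw [hmem'' d] at h3
        exact h3
      continuous_toFun := Continuous.subtype_mk
        (S.cont_comp hTop (hTop.continuous_inv.comp continuous_subtype_val)
          continuous_const hcomp2)
        (fun c => S.src_comp _ h (hcomp2 c))
      continuous_invFun := Continuous.subtype_mk
        (hTop.continuous_inv.comp
          (S.cont_comp hTop continuous_subtype_val continuous_const hcomp2'))
        (fun d => by
          show S.tgt (S.inv (S.comp (↑d) (S.inv h))) = S.src g
          rw [S.tgt_inv, S.src_comp _ _ (hcomp2' d), S.src_inv, ← hc']) }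
  -- open sets and meager sets in the fiber over `src g`
  have hW₁ : IsOpen (e₁ ⁻¹' (Subtype.val ⁻¹' U)) :=
    (hU _ hy).preimage e₁.continuous
  have hW₂ : IsOpen (e₂ ⁻¹' (Subtype.val ⁻¹' V)) :=
    (hV _ hz).preimage e₂.continuous
  have hM₁ : IsMeagre (e₁ ⁻¹' (Subtype.val ⁻¹' (U \ A))) :=
    IsMeagre.preimage_of_isOpenMap e₁.continuous e₁.isOpenMap (hUA _ hy)
  have hM₂ : IsMeagre (e₂ ⁻¹' (Subtype.val ⁻¹' (V \ B))) :=
    IsMeagre.preimage_of_isOpenMap e₂.continuous e₂.isOpenMap (hVB _ hz)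
  -- the unit `src g` lies in both open sets
  have hxF : S.src g ∈ S.tgt ⁻¹' {S.src g} := S.tgt_of_src g
  have hx₁ : (⟨S.src g, hxF⟩ : ↥(S.tgt ⁻¹' {S.src g})) ∈ e₁ ⁻¹' (Subtype.val ⁻¹' U) := by
    show S.comp g (S.src g) ∈ U
    rwa [S.comp_src]
  have hx₂ : (⟨S.src g, hxF⟩ : ↥(S.tgt ⁻¹' {S.src g})) ∈ e₂ ⁻¹' (Subtype.val ⁻¹' V) := by
    show S.comp (S.inv (S.src g)) h ∈ V
    rwa [S.inv_unit hx, hc', S.tgt_comp_self]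
  -- Baire category argument
  have hdense : Dense ((e₁ ⁻¹' (Subtype.val ⁻¹' (U \ A)) ∪
      e₂ ⁻¹' (Subtype.val ⁻¹' (V \ B)))ᶜ) :=
    dense_of_mem_residual (by rw [Set.compl_union]; exact Filter.inter_mem hM₁ hM₂)
  obtain ⟨c, hcM, hcW⟩ := hdense.exists_mem_open (hW₁.inter hW₂)
    ⟨⟨S.src g, hxF⟩, hx₁, hx₂⟩
  rw [Set.mem_compl_iff, Set.mem_union] at hcM
  push_neg at hcM
  have haA : S.comp g ↑c ∈ A := by
    have h1 : S.comp g ↑c ∈ U := hcW.1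
    have h2 : S.comp g ↑c ∉ U \ A := hcM.1
    by_contra hn
    exact h2 ⟨h1, hn⟩
  have hbB : S.comp (S.inv ↑c) h ∈ B := by
    have h1 : S.comp (S.inv ↑c) h ∈ V := hcW.2
    have h2 : S.comp (S.inv ↑c) h ∉ V \ B := hcM.2
    by_contra hn
    exact h2 ⟨h1, hn⟩
  refine ⟨S.comp g ↑c, haA, S.comp (S.inv ↑c) h, hbB, ?_, ?_⟩
  · show S.src _ = S.tgt _
    rw [S.src_comp _ _ (hcomp1 c), S.tgt_comp _ _ (hcomp2 c), S.tgt_inv]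
  · rw [S.comp_assoc _ _ _ (hcomp1 c)
      (by rw [S.tgt_comp _ _ (hcomp2 c), S.tgt_inv]),
      ← S.comp_assoc (↑c) _ _ (S.tgt_inv ↑c).symm (hcomp2 c), S.comp_inv_self,
      (hmem c).trans hc', S.tgt_comp_self]
end

section
/- Let G be a quasi-Polish groupoid and H ⊆ G a subgroupoid (a subset closed under inverse and multiplication) which is quasi-Polish in the subspace topology and τ-fiberwise dense, i.e. H ∩ τ⁻¹(x) is dense in τ⁻¹(x) for every x ∈ G⁰. Then H = G. -/
open Set Topology

attribute [local instance] Classical.propDecidable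

namespace QPAux

/-- Sierpiński open sets are upward closed. -/
lemma sier_mono {u : Set Prop} (hu : IsOpen u) {p q : Prop} (hp : p ∈ u) (hpq : p → q) :
    q ∈ u := by
  have hu' : TopologicalSpace.GenerateOpen {{True}} u := hu
  clear hu
  revert hp
  induction hu' with
  | basic s hs =>
    intro hp
    rw [mem_singleton_iff] at hs
    subst hs
    rw [mem_singleton_iff] at hp ⊢
    exact eq_true (hpq (of_eq_true hp))
  | univ => intro _; trivial
  | inter s t _ _ ihs iht => exact fun hp => ⟨ihs hp.1, iht hp.2⟩
  | sUnion S _ ih =>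
    rintro ⟨t, htS, hpt⟩
    exact ⟨t, htS, ih t htS hpt⟩

lemma pi_open_witness {W : Set (ℕ → Prop)} (hW : IsOpen W) {a : ℕ → Prop} (ha : a ∈ W) :
    ∃ w : ℕ → Prop, (∀ i, w i → a i) ∧ {i | w i}.Finite ∧
      ∀ b : ℕ → Prop, (∀ i, w i → b i) → b ∈ W := by
  obtain ⟨I, u, hu, hsub⟩ := isOpen_pi_iff.1 hW a ha
  refine ⟨fun i => i ∈ I ∧ a i, fun i h => h.2,
    (I.finite_toSet.subset fun i h => h.1), fun b hb => hsub ?_⟩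
  rw [Set.mem_pi]
  intro i hi
  exact sier_mono (hu i hi).1 (hu i hi).2 fun hai => hb i ⟨hi, hai⟩

lemma isOpen_upperset (c : ℕ → Prop) (h : {i | c i}.Finite) :
    IsOpen {b : ℕ → Prop | ∀ i, c i → b i} := by
  have he : {b : ℕ → Prop | ∀ i, c i → b i} = ⋂ i ∈ {i | c i}, {b : ℕ → Prop | b i} := by
    ext b; simp only [mem_setOf_eq, mem_iInter]
  rw [he]
  refine h.isOpen_biInter fun i _ => ?_
  have hP : IsOpen {p : Prop | p} := by
    have he2 : ({True} : Set Prop) = {p : Prop | p} := by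
      ext p
      simp only [mem_singleton_iff, mem_setOf_eq]
      exact ⟨fun h => of_eq_true h, fun h => eq_true h⟩
    rw [← he2]; exact isOpen_singleton_true
  show IsOpen ((fun b : ℕ → Prop => b i) ⁻¹' {p : Prop | p})
  exact hP.preimage (continuous_apply i)



variable {X Y : Type*} [TopologicalSpace X] [TopologicalSpace Y]

lemma isPi02_closed_union_open {C O : Set X} (hC : IsClosed C) (hO : IsOpen O) :
    IsPi02 (C ∪ O) :=
  ⟨fun _ => C, fun _ => O, fun _ => hC, fun _ => hO, (iInter_const _).symm⟩

lemma isPi02_of_isClosed {C : Set X} (hC : IsClosed C) : IsPi02 C := by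
  have := isPi02_closed_union_open hC isOpen_empty
  simpa using this

lemma isPi02_of_isOpen {O : Set X} (hO : IsOpen O) : IsPi02 O := by
  have := isPi02_closed_union_open isClosed_empty hO
  simpa using this

lemma isPi02_iInter {A : ℕ → Set X} (h : ∀ n, IsPi02 (A n)) : IsPi02 (⋂ n, A n) := by
  choose C O hC hO hA using h
  let e := Denumerable.eqv (ℕ × ℕ)
  refine ⟨fun k => C (e.symm k).1 (e.symm k).2, fun k => O (e.symm k).1 (e.symm k).2,
    fun k => hC _ _, fun k => hO _ _, ?_⟩
  ext x
  simp only [mem_iInter]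
  constructor
  · intro hx k
    have := hx (e.symm k).1
    rw [hA] at this
    exact mem_iInter.1 this (e.symm k).2
  · intro hx n
    rw [hA]
    refine mem_iInter.2 fun m => ?_
    have := hx (e (n, m))
    simpa using this

lemma isPi02_inter {A B : Set X} (hA : IsPi02 A) (hB : IsPi02 B) : IsPi02 (A ∩ B) := by
  have he : A ∩ B = ⋂ n : ℕ, (if n = 0 then A else B) := by
    ext x
    simp only [mem_iInter, mem_inter_iff]
    constructor
    · rintro ⟨h1, h2⟩ n
      split <;> assumption
    · intro h
      have h0 := h 0
      have h1 := h 1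
      simp only [if_pos rfl] at h0
      simp only [one_ne_zero, if_neg] at h1
      exact ⟨h0, h1⟩
  rw [he]
  exact isPi02_iInter fun n => by split <;> assumption

lemma isPi02_preimage {f : X → Y} (hf : Continuous f) {A : Set Y} (h : IsPi02 A) :
    IsPi02 (f ⁻¹' A) := by
  obtain ⟨C, O, hC, hO, hA⟩ := h
  exact ⟨fun n => f ⁻¹' C n, fun n => f ⁻¹' O n, fun n => (hC n).preimage hf,
    fun n => (hO n).preimage hf, by rw [hA]; simp [preimage_iInter, preimage_union]⟩

lemma exists_nat_basis (X : Type*) [TopologicalSpace X] [SecondCountableTopology X] :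
    ∃ u : ℕ → Set X, (∀ n, IsOpen (u n)) ∧
      ∀ (x : X) (U : Set X), IsOpen U → x ∈ U → ∃ n, x ∈ u n ∧ u n ⊆ U := by
  obtain ⟨b, hbc, -, hbb⟩ := TopologicalSpace.exists_countable_basis X
  obtain ⟨u, hu⟩ := (hbc.insert univ).exists_eq_range (insert_nonempty _ _)
  refine ⟨u, ?_, ?_⟩
  · intro n
    have : u n ∈ insert univ b := hu ▸ mem_range_self n
    rcases this with h | h
    · rw [h]; exact isOpen_univ
    · exact hbb.isOpen h
  · intro x U hU hx
    obtain ⟨v, hvb, hxv, hvU⟩ := hbb.exists_subset_of_mem_open hx hU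
    have : v ∈ range u := by rw [← hu]; exact mem_insert_of_mem _ hvb
    obtain ⟨n, rfl⟩ := this
    exact ⟨n, hxv, hvU⟩

lemma isPi02_singleton [T0Space X] [SecondCountableTopology X] (x : X) :
    IsPi02 ({x} : Set X) := by
  obtain ⟨u, huo, hub⟩ := exists_nat_basis X
  refine ⟨fun n => if x ∈ u n then ∅ else (u n)ᶜ, fun n => if x ∈ u n then u n else ∅,
    fun n => by
      show IsClosed (if x ∈ u n then ∅ else (u n)ᶜ)
      split
      · exact isClosed_empty
      · exact (huo n).isClosed_compl,
    fun n => by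
      show IsOpen (if x ∈ u n then u n else ∅)
      split
      · exact huo n
      · exact isOpen_empty, ?_⟩
  ext y
  simp only [mem_singleton_iff, mem_iInter]
  constructor
  · rintro rfl n
    by_cases h : y ∈ u n
    · simp only [if_pos h]
      exact Or.inr h
    · simp only [if_neg h]
      exact Or.inl h
  · intro hy
    refine (Inseparable.eq ?_).symm
    rw [inseparable_iff_forall_isOpen]
    intro U hU
    constructor
    · intro hxU
      obtain ⟨n, hxn, hnU⟩ := hub x U hU hxU
      have := hy n
      simp only [if_pos hxn] at this
      rcases this with h | h
      · exact absurd h (notMem_empty y)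
      · exact hnU h
    · intro hyU
      obtain ⟨n, hyn, hnU⟩ := hub y U hU hyU
      by_cases hxn : x ∈ u n
      · exact hnU hxn
      · have := hy n
        simp only [if_neg hxn] at this
        rcases this with h | h
        · exact absurd hyn h
        · exact absurd h (notMem_empty y)

lemma isPi02_image_val {B : Set X} (hB : IsPi02 B) {S : Set ↥B} (hS : IsPi02 S) :
    IsPi02 ((Subtype.val '' S : Set X)) := by
  obtain ⟨C, O, hC, hO, hSeq⟩ := hS
  choose C' hC' hCeq using fun n => isClosed_induced_iff.1 (hC n)
  choose O' hO' hOeq using fun n => isOpen_induced_iff.1 (hO n)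
  have key : Subtype.val '' S = B ∩ ⋂ n, (C' n ∪ O' n) := by
    ext z
    constructor
    · rintro ⟨s, hs, rfl⟩
      refine ⟨s.2, mem_iInter.2 fun n => ?_⟩
      rw [hSeq] at hs
      have := mem_iInter.1 hs n
      rcases this with h | h
      · rw [← hCeq n] at h
        exact Or.inl h
      · rw [← hOeq n] at h
        exact Or.inr h
    · rintro ⟨hzB, hz⟩
      refine ⟨⟨z, hzB⟩, ?_, rfl⟩
      rw [hSeq]
      refine mem_iInter.2 fun n => ?_
      have := mem_iInter.1 hz n
      rcases this with h | h
      · left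
        rw [← hCeq n]
        exact h
      · right
        rw [← hOeq n]
        exact h
  rw [key]
  exact isPi02_inter hB (isPi02_iInter fun n => isPi02_closed_union_open (hC' n) (hO' n))



instance : T0Space Prop := by
  refine ⟨fun p q h => ?_⟩
  have := h.mem_open_iff (s := {True}) isOpen_singleton_true
  simp only [mem_singleton_iff] at this
  refine propext ⟨fun hp => ?_, fun hq => ?_⟩
  · exact of_eq_true (this.1 (eq_true hp))
  · exact of_eq_true (this.2 (eq_true hq))

lemma isPi02_eqSet [T0Space X] [SecondCountableTopology X] {f g : Y → X}
    (hf : Continuous f) (hg : Continuous g) : IsPi02 {y | f y = g y} := by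
  obtain ⟨u, huo, hub⟩ := exists_nat_basis X
  have key : {y | f y = g y} =
      ⋂ n, (((f ⁻¹' u n)ᶜ ∪ g ⁻¹' u n) ∩ ((g ⁻¹' u n)ᶜ ∪ f ⁻¹' u n)) := by
    ext y
    simp only [mem_setOf_eq, mem_iInter, mem_inter_iff, mem_union, mem_compl_iff, mem_preimage]
    constructor
    · intro h n
      rw [h]
      constructor
      · by_cases hgy : g y ∈ u n
        · exact Or.inr hgy
        · exact Or.inl hgy
      · by_cases hgy : g y ∈ u n
        · exact Or.inr hgy
        · exact Or.inl hgy
    · intro h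
      refine Inseparable.eq ?_
      rw [inseparable_iff_forall_isOpen]
      intro U hU
      constructor
      · intro hfU
        obtain ⟨n, hn, hnU⟩ := hub _ U hU hfU
        rcases (h n).1 with h' | h'
        · exact absurd hn h'
        · exact hnU h'
      · intro hgU
        obtain ⟨n, hn, hnU⟩ := hub _ U hU hgU
        rcases (h n).2 with h' | h'
        · exact absurd hn h'
        · exact hnU h'
  rw [key]
  refine isPi02_iInter fun n => isPi02_inter ?_ ?_
  · exact isPi02_closed_union_open (((huo n).preimage hf).isClosed_compl) ((huo n).preimage hg)
  · exact isPi02_closed_union_open (((huo n).preimage hg).isClosed_compl) ((huo n).preimage hf)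

lemma dense_isPi02_subset {P : Set X} (hP : IsPi02 P) (hd : Dense P) :
    ∃ g : ℕ → Set X, (∀ n, IsOpen (g n)) ∧ (∀ n, Dense (g n)) ∧ (⋂ n, g n) ⊆ P := by
  obtain ⟨C, O, hC, hO, hPeq⟩ := hP
  refine ⟨fun n => interior (C n) ∪ O n, fun n => isOpen_interior.union (hO n),
    fun n => ?_, fun x hx => ?_⟩
  · have hdn : Dense (C n ∪ O n) := hd.mono (by rw [hPeq]; exact iInter_subset _ n)
    rw [dense_iff_inter_open]
    intro V hV hVne
    rcases (V ∩ O n).eq_empty_or_nonempty with hVO | hVO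
    · have hVC : V ⊆ C n := by
        intro v hv
        rw [← (hC n).closure_eq]
        rw [mem_closure_iff]
        intro W hW hvW
        have : ((W ∩ V) ∩ (C n ∪ O n)).Nonempty :=
          hdn.inter_open_nonempty _ (hW.inter hV) ⟨v, hvW, hv⟩
        obtain ⟨z, hz1, hz2⟩ := this
        rcases hz2 with hz2 | hz2
        · exact ⟨z, hz1.1, hz2⟩
        · exact absurd (eq_empty_iff_forall_notMem.1 hVO z ⟨hz1.2, hz2⟩) (fun h => h)
      have : V ⊆ interior (C n) := hV.subset_interior_iff.2 hVC
      obtain ⟨v, hv⟩ := hVne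
      exact ⟨v, hv, Or.inl (this hv)⟩
    · obtain ⟨v, hv1, hv2⟩ := hVO
      exact ⟨v, hv1, Or.inr hv2⟩
  · rw [hPeq]
    refine mem_iInter.2 fun n => ?_
    have := mem_iInter.1 hx n
    rcases this with h | h
    · exact Or.inl (interior_subset h)
    · exact Or.inr h

lemma dense_preimage_homeo (e : X ≃ₜ Y) {t : Set Y} (h : Dense t) : Dense (⇑e ⁻¹' t) := by
  rw [dense_iff_closure_eq] at h ⊢
  rw [← Homeomorph.preimage_closure, h, preimage_univ]

lemma baireSpace_of_homeomorph [BaireSpace Y] (e : X ≃ₜ Y) : BaireSpace X := by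
  constructor
  intro f ho hd
  have h1 : Dense (⋂ n, ⇑e.symm ⁻¹' f n) :=
    dense_iInter_of_isOpen_nat (fun n => (ho n).preimage e.symm.continuous)
      (fun n => dense_preimage_homeo e.symm (hd n))
  have h2 : Dense (⇑e ⁻¹' ⋂ n, ⇑e.symm ⁻¹' f n) := dense_preimage_homeo e h1
  rw [preimage_iInter] at h2
  have he : ∀ s : Set X, ⇑e ⁻¹' (⇑e.symm ⁻¹' s) = s := fun s => by
    ext z; simp
  simp only [he] at h2
  exact h2

lemma nonempty_inter_of_dense_isPi02 [BaireSpace X] [Nonempty X]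
    {P Q : Set X} (hP : IsPi02 P) (hPd : Dense P) (hQ : IsPi02 Q) (hQd : Dense Q) :
    (P ∩ Q).Nonempty := by
  obtain ⟨g1, hg1o, hg1d, hg1s⟩ := dense_isPi02_subset hP hPd
  obtain ⟨g2, hg2o, hg2d, hg2s⟩ := dense_isPi02_subset hQ hQd
  have hd : Dense (⋂ n, g1 n ∩ g2 n) :=
    dense_iInter_of_isOpen_nat (fun n => (hg1o n).inter (hg2o n))
      (fun n => (hg1d n).inter_of_isOpen_left (hg2d n) (hg1o n))
  obtain ⟨z, hz⟩ := hd.nonempty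
  refine ⟨z, hg1s (mem_iInter.2 fun n => (mem_iInter.1 hz n).1),
    hg2s (mem_iInter.2 fun n => (mem_iInter.1 hz n).2)⟩

lemma IsQuasiPolish.secondCountable (h : IsQuasiPolish X) : SecondCountableTopology X := by
  obtain ⟨A, -, ⟨e⟩⟩ := h
  exact e.secondCountableTopology

lemma IsQuasiPolish.t0 (h : IsQuasiPolish X) : T0Space X := by
  obtain ⟨A, -, ⟨e⟩⟩ := h
  exact e.isEmbedding.t0Space

/-- Subtype of a subtype: homeomorphism with the image under `val`. -/
def homeomorphImageVal {Z : Type*} [TopologicalSpace Z] {A : Set Z} (S : Set ↥A) :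
    ↥S ≃ₜ ↥(Subtype.val '' S : Set Z) where
  toFun x := ⟨↑↑x, mem_image_of_mem _ x.2⟩
  invFun y := ⟨⟨↑y, by obtain ⟨a, -, h⟩ := y.2; exact h ▸ a.2⟩, by
    obtain ⟨a, haS, hay⟩ := y.2
    have h : (⟨(↑y : Z), by obtain ⟨a, -, h⟩ := y.2; exact h ▸ a.2⟩ : ↥A) = a :=
      Subtype.ext hay.symm
    rw [h]
    exact haS⟩
  left_inv x := by ext; rfl
  right_inv y := by ext; rfl
  continuous_toFun := by
    apply Continuous.subtype_mk
    exact continuous_subtype_val.comp continuous_subtype_val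
  continuous_invFun := by
    apply Continuous.subtype_mk
    apply Continuous.subtype_mk
    exact continuous_subtype_val

lemma isQuasiPolish_of_isPi02 (hX : IsQuasiPolish X) {B : Set X} (hB : IsPi02 B) :
    IsQuasiPolish ↥B := by
  obtain ⟨A, hA, ⟨e⟩⟩ := hX
  have h1 : IsPi02 (⇑e '' B : Set ↥A) := by
    have him : ⇑e '' B = ⇑e.symm ⁻¹' B := by
      ext z
      constructor
      · rintro ⟨b, hb, rfl⟩
        simpa using hb
      · intro hz
        exact ⟨e.symm z, hz, by simp⟩
    rw [him]
    exact isPi02_preimage e.symm.continuous hB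
  refine ⟨Subtype.val '' (⇑e '' B), isPi02_image_val hA h1, ⟨?_⟩⟩
  exact (e.image B).trans (homeomorphImageVal _)


theorem baireSpace_of_isPi02 {A : Set (ℕ → Prop)} (hA : IsPi02 A) : BaireSpace ↥A := by
  obtain ⟨C, O, hC, hO, hAeq⟩ := hA
  constructor
  intro f hfo hfd
  rw [dense_iff_inter_open]
  rintro U hU ⟨⟨a₀, ha₀A⟩, ha₀U⟩
  obtain ⟨V, hVopen, hVeq⟩ := isOpen_induced_iff.1 hU
  have ha₀V : a₀ ∈ V := by
    have := ha₀U
    rw [← hVeq] at this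
    exact this
  choose D hDopen hDeq using fun n => isOpen_induced_iff.1 (hfo n)
  -- density in ambient terms
  have hden : ∀ (n : ℕ) (c : ℕ → Prop), {i | c i}.Finite → ∀ a ∈ A, (∀ i, c i → a i) →
      ∃ a' ∈ A, a' ∈ D n ∧ ∀ i, c i → a' i := by
    intro n c hcfin a haA hca
    have hNopen : IsOpen {b : ℕ → Prop | ∀ i, c i → b i} := isOpen_upperset c hcfin
    have hne : ((Subtype.val ⁻¹' {b : ℕ → Prop | ∀ i, c i → b i} : Set ↥A) ∩ f n).Nonempty :=
      (hfd n).inter_open_nonempty _ (hNopen.preimage continuous_subtype_val) ⟨⟨a, haA⟩, hca⟩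
    obtain ⟨⟨a', ha'A⟩, ha'N, ha'f⟩ := hne
    refine ⟨a', ha'A, ?_, ha'N⟩
    have : (⟨a', ha'A⟩ : ↥A) ∈ Subtype.val ⁻¹' D n := by
      rw [hDeq n]; exact ha'f
    exact this
  -- states
  have key : ∀ (k : ℕ)
      (s : {p : (ℕ → Prop) × (ℕ → Prop) // p.1 ∈ A ∧ (∀ i, p.2 i → p.1 i) ∧ {i | p.2 i}.Finite}),
      ∃ t : {p : (ℕ → Prop) × (ℕ → Prop) // p.1 ∈ A ∧ (∀ i, p.2 i → p.1 i) ∧ {i | p.2 i}.Finite},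
        (∀ i, s.1.2 i → t.1.2 i) ∧
        (∀ b, (∀ i, t.1.2 i → b i) → b ∈ D k) ∧
        (∀ n, n ≤ k → t.1.1 ∈ O n → ∀ b, (∀ i, t.1.2 i → b i) → b ∈ O n) := by
    rintro k ⟨⟨aprev, c⟩, hprevA, hcprev, hcfin⟩
    obtain ⟨a, haA, haD, hca⟩ := hden k c hcfin aprev hprevA hcprev
    obtain ⟨wD, hwDa, hwDfin, hwDspec⟩ := pi_open_witness (hDopen k) haD
    have hOy : ∀ n, ∃ w : ℕ → Prop, (∀ i, w i → a i) ∧ {i | w i}.Finite ∧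
        ((n ≤ k ∧ a ∈ O n) → ∀ b, (∀ i, w i → b i) → b ∈ O n) := by
      intro n
      by_cases h : n ≤ k ∧ a ∈ O n
      · obtain ⟨w, h1, h2, h3⟩ := pi_open_witness (hO n) h.2
        exact ⟨w, h1, h2, fun _ => h3⟩
      · exact ⟨fun _ => False, fun i hi => hi.elim, by simp, fun hcon => absurd hcon h⟩
    choose W hWa hWfin hWspec using hOy
    refine ⟨⟨⟨a, fun i => c i ∨ wD i ∨ ∃ n, n ≤ k ∧ W n i⟩, haA, ?_, ?_⟩, ?_, ?_, ?_⟩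
    · rintro i (h | h | ⟨n, -, h⟩)
      · exact hca i h
      · exact hwDa i h
      · exact hWa n i h
    · have hsub : {i | c i ∨ wD i ∨ ∃ n, n ≤ k ∧ W n i} ⊆
          ({i | c i} ∪ {i | wD i}) ∪ ⋃ n ∈ Set.Iic k, {i | W n i} := by
        rintro i (h | h | ⟨n, hn, h⟩)
        · exact Or.inl (Or.inl h)
        · exact Or.inl (Or.inr h)
        · exact Or.inr (mem_biUnion hn h)
      exact (((hcfin.union hwDfin).union
        ((Set.finite_Iic k).biUnion fun n _ => hWfin n)).subset hsub)
    · exact fun i hci => Or.inl hci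
    · intro b hb
      exact hwDspec b fun i hw => hb i (Or.inr (Or.inl hw))
    · intro n hn hOn b hb
      exact hWspec n ⟨hn, hOn⟩ b fun i hw => hb i (Or.inr (Or.inr ⟨n, hn, hw⟩))
  choose step hstep1 hstep2 hstep3 using key
  obtain ⟨w0, hw0a, hw0fin, hw0spec⟩ := pi_open_witness hVopen ha₀V
  let s0 : {p : (ℕ → Prop) × (ℕ → Prop) // p.1 ∈ A ∧ (∀ i, p.2 i → p.1 i) ∧ {i | p.2 i}.Finite} :=
    ⟨(a₀, w0), ha₀A, hw0a, hw0fin⟩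
  let seq : ℕ → {p : (ℕ → Prop) × (ℕ → Prop) // p.1 ∈ A ∧ (∀ i, p.2 i → p.1 i) ∧
      {i | p.2 i}.Finite} := fun k => Nat.rec (step 0 s0) (fun k s => step (k + 1) s) k
  set a : ℕ → (ℕ → Prop) := fun k => (seq k).1.1 with ha_def
  set c : ℕ → (ℕ → Prop) := fun k => (seq k).1.2 with hc_def
  have haA : ∀ k, a k ∈ A := fun k => (seq k).2.1
  have hcle : ∀ k i, c k i → a k i := fun k => (seq k).2.2.1
  have hw0c : ∀ i, w0 i → c 0 i := hstep1 0 s0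
  have hmono : ∀ k i, c k i → c (k + 1) i := fun k => hstep1 (k + 1) (seq k)
  have hmono' : ∀ j k, j ≤ k → ∀ i, c j i → c k i := by
    intro j k hjk
    induction k, hjk using Nat.le_induction with
    | base => exact fun i h => h
    | succ k hk ih => exact fun i h => hmono k i (ih i h)
  have hD : ∀ k b, (∀ i, c k i → b i) → b ∈ D k := by
    intro k
    cases k with
    | zero => exact hstep2 0 s0
    | succ k => exact hstep2 (k + 1) (seq k)
  have hOspec : ∀ k n, n ≤ k → a k ∈ O n → ∀ b, (∀ i, c k i → b i) → b ∈ O n := by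
    intro k
    cases k with
    | zero => exact hstep3 0 s0
    | succ k => exact hstep3 (k + 1) (seq k)
  set x : ℕ → Prop := fun i => ∃ k, c k i with hx_def
  have hcx : ∀ k i, c k i → x i := fun k i h => ⟨k, h⟩
  have hxV : x ∈ V := hw0spec x fun i h => hcx 0 i (hw0c i h)
  have hxD : ∀ n, x ∈ D n := fun n => hD n x (hcx n)
  have hxA : x ∈ A := by
    rw [hAeq]
    refine mem_iInter.2 fun n => ?_
    by_cases hcase : ∃ k, n ≤ k ∧ a k ∈ O n
    · obtain ⟨k, hnk, hk⟩ := hcase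
      exact Or.inr (hOspec k n hnk hk x (hcx k))
    · push_neg at hcase
      left
      have haC : ∀ k, n ≤ k → a k ∈ C n := by
        intro k hk
        have := haA k
        rw [hAeq] at this
        rcases mem_iInter.1 this n with h | h
        · exact h
        · exact absurd h (hcase k hk)
      rw [← (hC n).closure_eq]
      rw [mem_closure_iff]
      intro W hWo hxW
      obtain ⟨w, hwx, hwfin, hwspec⟩ := pi_open_witness hWo hxW
      set g : ℕ → ℕ := fun i => if h : ∃ k, c k i then h.choose else 0 with hg_def
      set K : ℕ := max n (hwfin.toFinset.sup g) with hK_def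
      have hwK : ∀ i, w i → c K i := by
        intro i hwi
        have hxi : ∃ k, c k i := hwx i hwi
        have hgi : c (g i) i := by
          simp only [hg_def, dif_pos hxi]
          exact hxi.choose_spec
        refine hmono' (g i) K ?_ i hgi
        calc g i ≤ hwfin.toFinset.sup g :=
              Finset.le_sup (by rw [Set.Finite.mem_toFinset]; exact hwi)
          _ ≤ K := le_max_right _ _
      have haKW : a K ∈ W := hwspec (a K) fun i h => hcle K i (hwK i h)
      exact ⟨a K, haKW, haC K (le_max_left _ _)⟩
  refine ⟨⟨x, hxA⟩, ?_, ?_⟩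
  · show (⟨x, hxA⟩ : ↥A) ∈ U
    rw [← hVeq]
    exact hxV
  · refine mem_iInter.2 fun n => ?_
    rw [← hDeq n]
    exact hxD n


lemma IsQuasiPolish.baireSpace (h : IsQuasiPolish X) : BaireSpace X := by
  obtain ⟨A, hA, ⟨e⟩⟩ := h
  have := baireSpace_of_isPi02 hA
  exact baireSpace_of_homeomorph e

theorem isPi02_of_isQuasiPolish_subset (hX : IsQuasiPolish X) {H : Set X}
    (hH : IsQuasiPolish ↥H) : IsPi02 H := by
  have hSC : SecondCountableTopology X := IsQuasiPolish.secondCountable hX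
  have hT0 : T0Space X := IsQuasiPolish.t0 hX
  obtain ⟨A, hA, ⟨e⟩⟩ := hH
  have hUn : ∀ n, IsOpen {h : ↥H | (e h : ℕ → Prop) n} := by
    intro n
    have hc : Continuous fun h : ↥H => ((e h : ℕ → Prop) n) :=
      (continuous_apply n).comp (continuous_subtype_val.comp e.continuous)
    exact continuous_Prop.1 hc
  choose V hVopen hVeq using fun n => isOpen_induced_iff.1 (hUn n)
  set F : X → (ℕ → Prop) := fun z n => z ∈ V n with hF_def
  have hFcont : Continuous F := continuous_pi fun n => continuous_Prop.2 (hVopen n)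
  have hFH : ∀ h : ↥H, F ↑h = (e h : ℕ → Prop) := by
    intro h
    funext n
    apply propext
    constructor
    · intro hv
      have : h ∈ Subtype.val ⁻¹' V n := hv
      rw [hVeq n] at this
      exact this
    · intro hh
      have : h ∈ Subtype.val ⁻¹' V n := by
        rw [hVeq n]
        exact hh
      exact this
  have hBpi : IsPi02 (F ⁻¹' A) := isPi02_preimage hFcont hA
  have hHB : ∀ h : ↥H, F ↑h ∈ A := fun h => by rw [hFH h]; exact (e h).2
  set r : ↥(F ⁻¹' A) → X := fun b => ((e.symm ⟨F ↑b, b.2⟩ : ↥H) : X) with hr_def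
  have hrcont : Continuous r :=
    continuous_subtype_val.comp (e.symm.continuous.comp
      (Continuous.subtype_mk (hFcont.comp continuous_subtype_val) fun b => b.2))
  have key : H = Subtype.val '' {b : ↥(F ⁻¹' A) | r b = ↑b} := by
    ext z
    constructor
    · intro hz
      have hzB : z ∈ F ⁻¹' A := hHB ⟨z, hz⟩
      refine ⟨⟨z, hzB⟩, ?_, rfl⟩
      show ((e.symm ⟨F z, hzB⟩ : ↥H) : X) = z
      have heq : (⟨F z, hzB⟩ : ↥A) = e ⟨z, hz⟩ := Subtype.ext (hFH ⟨z, hz⟩)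
      rw [heq, e.symm_apply_apply]
    · rintro ⟨b, hb, rfl⟩
      have : r b ∈ H := (e.symm ⟨F ↑b, b.2⟩).2
      rw [hb] at this
      exact this
  rw [key]
  exact isPi02_image_val hBpi (isPi02_eqSet hrcont continuous_subtype_val)

end QPAux

/-- A τ-fiberwise dense quasi-Polish subgroupoid of a quasi-Polish groupoid is
the whole groupoid. -/
theorem dense_subgroupoid_eq_self {G : Type*} [TopologicalSpace G]
    (S : Groupoidal G) (hTop : S.IsTopological) (hQP : IsQuasiPolish G)
    (H : Set G) (hSub : S.IsSubgroupoid H) (hHQP : IsQuasiPolish ↥H)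
    (hDense : ∀ x ∈ S.units,
      Dense ((Subtype.val : ↥(S.tgt ⁻¹' {x}) → G) ⁻¹' H)) :
    H = Set.univ := by
  haveI hT0 : T0Space G := QPAux.IsQuasiPolish.t0 hQP
  haveI hSC : SecondCountableTopology G := QPAux.IsQuasiPolish.secondCountable hQP
  have hHpi : IsPi02 H := QPAux.isPi02_of_isQuasiPolish_subset hQP hHQP
  apply Set.eq_univ_of_forall
  intro g
  -- target and source fibers
  set x : G := S.tgt g with hx_def
  set y : G := S.src g with hy_def
  have hxu : x ∈ S.units := S.src_of_tgt g
  have hyu : y ∈ S.units := S.src_src g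
  -- the fibers are Π⁰₂, quasi-Polish, Baire
  have hFxpi : IsPi02 (S.tgt ⁻¹' {x}) :=
    QPAux.isPi02_preimage hTop.continuous_tgt (QPAux.isPi02_singleton x)
  have hFypi : IsPi02 (S.tgt ⁻¹' {y}) :=
    QPAux.isPi02_preimage hTop.continuous_tgt (QPAux.isPi02_singleton y)
  haveI : BaireSpace ↥(S.tgt ⁻¹' {x}) :=
    QPAux.IsQuasiPolish.baireSpace (QPAux.isQuasiPolish_of_isPi02 hQP hFxpi)
  haveI : Nonempty ↥(S.tgt ⁻¹' {x}) := ⟨⟨x, show S.tgt x = x from S.tgt_tgt g⟩⟩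
  -- left translation by g : fiber over y ≃ₜ fiber over x
  have hcomp : ∀ h : ↥(S.tgt ⁻¹' {y}), S.Composable g ↑h :=
    fun h => (show S.tgt ↑h = y from h.2).symm
  have hcomp' : ∀ k : ↥(S.tgt ⁻¹' {x}), S.Composable (S.inv g) ↑k := by
    intro k
    show S.src (S.inv g) = S.tgt ↑k
    rw [S.src_inv, show S.tgt ↑k = x from k.2]
  let φ : ↥(S.tgt ⁻¹' {y}) ≃ₜ ↥(S.tgt ⁻¹' {x}) :=
    { toFun := fun h => ⟨S.comp g ↑h, show S.tgt (S.comp g ↑h) = x from S.tgt_comp g ↑h (hcomp h)⟩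
      invFun := fun k => ⟨S.comp (S.inv g) ↑k, by
        show S.tgt (S.comp (S.inv g) ↑k) = y
        rw [S.tgt_comp _ _ (hcomp' k), S.tgt_inv]⟩
      left_inv := by
        intro h
        apply Subtype.ext
        show S.comp (S.inv g) (S.comp g ↑h) = ↑h
        rw [← S.comp_assoc (S.inv g) g ↑h (S.src_inv g) (hcomp h), S.inv_comp_self,
          hcomp h, S.tgt_comp_self]
      right_inv := by
        intro k
        apply Subtype.ext
        show S.comp g (S.comp (S.inv g) ↑k) = ↑k
        have hxk : S.tgt (↑k : G) = S.tgt g := k.2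
        rw [← S.comp_assoc g (S.inv g) ↑k (S.tgt_inv g).symm (hcomp' k), S.comp_inv_self,
          ← hxk, S.tgt_comp_self]
      continuous_toFun := by
        apply Continuous.subtype_mk
        exact hTop.continuous_comp.comp
          ((continuous_const.prodMk continuous_subtype_val).subtype_mk fun h => hcomp h)
      continuous_invFun := by
        apply Continuous.subtype_mk
        exact hTop.continuous_comp.comp
          ((continuous_const.prodMk continuous_subtype_val).subtype_mk fun k => hcomp' k) }
  -- the two dense Π⁰₂ sets in the fiber over x
  have hP : IsPi02 ((Subtype.val : ↥(S.tgt ⁻¹' {x}) → G) ⁻¹' H) :=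
    QPAux.isPi02_preimage continuous_subtype_val hHpi
  have hPd : Dense ((Subtype.val : ↥(S.tgt ⁻¹' {x}) → G) ⁻¹' H) := hDense x hxu
  have hQ : IsPi02 (⇑φ.symm ⁻¹' ((Subtype.val : ↥(S.tgt ⁻¹' {y}) → G) ⁻¹' H)) :=
    QPAux.isPi02_preimage φ.symm.continuous
      (QPAux.isPi02_preimage continuous_subtype_val hHpi)
  have hQd : Dense (⇑φ.symm ⁻¹' ((Subtype.val : ↥(S.tgt ⁻¹' {y}) → G) ⁻¹' H)) :=
    QPAux.dense_preimage_homeo φ.symm (hDense y hyu)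
  obtain ⟨k, hkH, hkQ⟩ := QPAux.nonempty_inter_of_dense_isPi02 hP hPd hQ hQd
  set h : ↥(S.tgt ⁻¹' {y}) := φ.symm k with hh_def
  have hhH : (↑h : G) ∈ H := hkQ
  have hkgh : S.comp g ↑h = (↑k : G) := congrArg Subtype.val (φ.apply_symm_apply k)
  have hch : S.src g = S.tgt ↑h := hcomp h
  have hinvH : S.inv ↑h ∈ H := by
    rw [← hSub.1]
    exact ⟨↑h, hhH, rfl⟩
  have hcomp2 : S.Composable ↑k (S.inv ↑h) := by
    show S.src ↑k = S.tgt (S.inv ↑h)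
    rw [← hkgh, S.src_comp g ↑h hch, S.tgt_inv]
  have hmem : S.comp ↑k (S.inv ↑h) ∈ H :=
    hSub.2 ⟨↑k, hkH, S.inv ↑h, hinvH, hcomp2, rfl⟩
  have hgeq : S.comp ↑k (S.inv ↑h) = g := by
    rw [← hkgh, S.comp_assoc g ↑h (S.inv ↑h) hch (S.tgt_inv ↑h).symm, S.comp_inv_self,
      ← hch, S.comp_src]
  rw [← hgeq]
  exact hmem
end

section
/- Let X and A be quasi-Polish spaces and p : A → X a continuous map. Then the fiberwise lower powerspace 𝓕_X(A) = {(x,F) : x ∈ X and F is a closed subset of the fiber A_x = p⁻¹(x)}, topologized by the subbasic open sets {(x,F) : x ∈ U} for open U ⊆ X and ◇_X S = {(x,F) : F ∩ S ≠ ∅} for open S ⊆ A, is quasi-Polish. -/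
open Set Topology

/-- `(x, F)` is admissible for the fiberwise lower powerspace of `p : A → X`
when `F` is a subset of the fiber `p⁻¹(x)` which is closed in the subspace
topology of that fiber. -/
def FibClosed {X A : Type*} [TopologicalSpace A] (p : A → X)
    (q : X × Set A) : Prop :=
  q.2 ⊆ p ⁻¹' {q.1} ∧
    IsClosed ((Subtype.val : ↥(p ⁻¹' {q.1}) → A) ⁻¹' q.2)

/-- The fiberwise lower powerspace `𝓕_X(A)` of `p : A → X`: pairs `(x, F)`
with `x ∈ X` and `F` a closed subset of the fiber `A_x = p⁻¹(x)`. -/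
def FLP {X A : Type*} [TopologicalSpace A] (p : A → X) : Type _ :=
  {q : X × Set A // FibClosed p q}

/-- The topology on the fiberwise lower powerspace, generated by the subbasic
open sets `{(x,F) : x ∈ U}` for open `U ⊆ X` and `◇_X S = {(x,F) : F ∩ S ≠ ∅}`
for open `S ⊆ A`. -/
def flpTopology {X A : Type*} [TopologicalSpace X] [TopologicalSpace A]
    (p : A → X) : TopologicalSpace (FLP p) :=
  TopologicalSpace.generateFrom
    ({W | ∃ U : Set X, IsOpen U ∧ W = {q : FLP p | q.val.1 ∈ U}} ∪
     {W | ∃ S : Set A, IsOpen S ∧ W = {q : FLP p | (q.val.2 ∩ S).Nonempty}})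



namespace FLPAux

/-! ### Sierpiński space basics -/

lemma prop_open_upper {u : Set Prop} (hu : IsOpen u) {p q : Prop}
    (hp : p ∈ u) (hpq : p → q) : q ∈ u := by
  by_cases hptrue : p
  · have : p = q := propext ⟨fun _ => hpq hptrue, fun _ => hptrue⟩
    rwa [← this]
  · have hpf : p = False := eq_false hptrue
    rw [hpf] at hp
    have hmem : u ∈ nhds False := hu.mem_nhds hp
    rw [nhds_false] at hmem
    have : u = univ := Filter.mem_top.mp hmem
    rw [this]; trivial

/-- The basic open upper set of a finite set in `𝕊^ℕ`. -/
def upSet (t : Finset ℕ) : Set (ℕ → Prop) := {f | ∀ n ∈ t, f n}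

lemma isOpen_upSet (t : Finset ℕ) : IsOpen (upSet t) := by
  have : upSet t = ⋂ n ∈ t, {f : ℕ → Prop | f n} := by
    ext f; simp [upSet]
  rw [this]
  exact isOpen_biInter_finset fun n _ => continuous_Prop.mp (continuous_apply n)

lemma upSet_anti {t t' : Finset ℕ} (h : t ⊆ t') : upSet t' ⊆ upSet t :=
  fun f hf n hn => hf n (h hn)

lemma chi_mem_upSet (t : Finset ℕ) : (fun n => n ∈ t : ℕ → Prop) ∈ upSet t :=
  fun _ hn => hn

/-- Every open set of `𝕊^ℕ` containing `f` contains a basic open around `f`. -/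
lemma exists_upSet_subset {W : Set (ℕ → Prop)} (hW : IsOpen W) {f : ℕ → Prop}
    (hf : f ∈ W) : ∃ t : Finset ℕ, f ∈ upSet t ∧ upSet t ⊆ W := by
  classical
  obtain ⟨I, u, h1, h2⟩ := isOpen_pi_iff.mp hW f hf
  refine ⟨I.filter (fun n => f n), fun n hn => (Finset.mem_filter.mp hn).2,
    fun g hg => h2 ?_⟩
  intro a ha
  have hopen := (h1 a ha).1
  have hmem := (h1 a ha).2
  by_cases hfa : f a
  · have hga : g a := hg a (Finset.mem_filter.mpr ⟨ha, hfa⟩)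
    have : f a = g a := propext ⟨fun _ => hga, fun _ => hfa⟩
    rwa [← this]
  · exact prop_open_upper hopen hmem (fun h => absurd h hfa)

/-- Open sets of `𝕊^ℕ` are upper sets. -/
lemma isOpen_upper {W : Set (ℕ → Prop)} (hW : IsOpen W) {f g : ℕ → Prop}
    (hf : f ∈ W) (h : ∀ n, f n → g n) : g ∈ W := by
  obtain ⟨t, hft, hsub⟩ := exists_upSet_subset hW hf
  exact hsub (fun n hn => h n (hft n hn))

/-! ### Π⁰₂ lemmas -/

lemma isPi02_iInter {Y : Type*} [TopologicalSpace Y] {ι : Type*} [Encodable ι]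
    {C O : ι → Set Y} (hC : ∀ i, IsClosed (C i)) (hO : ∀ i, IsOpen (O i)) :
    IsPi02 (⋂ i, C i ∪ O i) := by
  classical
  refine ⟨fun n => ((Encodable.decode (α := ι) n).elim univ C),
    fun n => ((Encodable.decode (α := ι) n).elim ∅ O), fun n => ?_, fun n => ?_, ?_⟩
  · cases h : Encodable.decode (α := ι) n <;> simp [h, hC]
  · cases h : Encodable.decode (α := ι) n <;> simp [h, hO]
  · ext y
    simp only [mem_iInter]
    constructor
    · intro h n
      cases hd : Encodable.decode (α := ι) n with
      | none => simp [hd]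
      | some i => simpa [hd] using h i
    · intro h i
      have := h (Encodable.encode i)
      simpa [Encodable.encodek] using this

lemma IsPi02.interPi02 {Y : Type*} [TopologicalSpace Y] {E₁ E₂ : Set Y}
    (h1 : IsPi02 E₁) (h2 : IsPi02 E₂) : IsPi02 (E₁ ∩ E₂) := by
  obtain ⟨C1, O1, hC1, hO1, rfl⟩ := h1
  obtain ⟨C2, O2, hC2, hO2, rfl⟩ := h2
  have : (⋂ n, C1 n ∪ O1 n) ∩ (⋂ n, C2 n ∪ O2 n)
      = ⋂ i : ℕ ⊕ ℕ, (Sum.elim C1 C2 i) ∪ (Sum.elim O1 O2 i) := by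
    ext y
    simp only [mem_inter_iff, mem_iInter, Sum.forall, Sum.elim_inl, Sum.elim_inr]
  rw [this]
  exact isPi02_iInter (fun i => by cases i <;> simp [hC1, hC2])
    (fun i => by cases i <;> simp [hO1, hO2])

lemma isPi02_image {Y Z : Type*} [TopologicalSpace Y] [TopologicalSpace Z]
    (e : Y ≃ₜ Z) {E : Set Y} (h : IsPi02 E) : IsPi02 (e '' E) := by
  obtain ⟨C, O, hC, hO, rfl⟩ := h
  refine ⟨fun n => e '' C n, fun n => e '' O n,
    fun n => (Homeomorph.isClosed_image e).mpr (hC n),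
    fun n => (Homeomorph.isOpen_image e).mpr (hO n), ?_⟩
  rw [image_iInter e.bijective]
  simp [image_union]

lemma isQuasiPolish_of_pi02 {Y Z : Type*} [TopologicalSpace Y] [TopologicalSpace Z]
    (hZ : Z ≃ₜ (ℕ → Prop)) {E : Set Z} (hE : IsPi02 E)
    (h : Nonempty (Y ≃ₜ ↥E)) : IsQuasiPolish Y :=
  ⟨hZ '' E, isPi02_image hZ hE, h.map fun e => e.trans (hZ.image E)⟩

noncomputable def prodHomeo : ((ℕ → Prop) × (Finset ℕ → Prop)) ≃ₜ (ℕ → Prop) := by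
  letI : Denumerable (Finset ℕ) := Denumerable.ofEncodableOfInfinite _
  exact (Homeomorph.sumArrowHomeomorphProdArrow).symm.trans
    (Homeomorph.piCongrLeft (Y := fun _ => Prop) (Denumerable.eqv (ℕ ⊕ Finset ℕ)))

open scoped Classical in
/-- The sequence of finite stages used to build a point of `𝕊^ℕ`. -/
noncomputable def buildSeq {ι : Type*} (σ : ℕ → ι) (v : Finset ℕ → Prop)
    (Sat : ι → Finset ℕ → Prop) (s : Finset ℕ) : ℕ → Finset ℕ
  | 0 => s
  | m + 1 =>
    let t := buildSeq σ v Sat s m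
    if h : ∃ t', t ⊆ t' ∧ Sat (σ m) t' ∧ v t' then h.choose else t

/-- Core construction: build a point of `𝕊^ℕ` above `s` all of whose finite
approximations satisfy `v`, meeting every triggered requirement. -/
lemma exists_limit {ι : Type*} (σ : ℕ → ι) (hσ : ∀ i M, ∃ m, M ≤ m ∧ σ m = i)
    (v : Finset ℕ → Prop) (hanti : ∀ ⦃t t'⦄, t ⊆ t' → v t' → v t)
    (Trig Sat : ι → Finset ℕ → Prop)
    (hTrig : ∀ i ⦃t t'⦄, t ⊆ t' → Trig i t → Trig i t')
    (hext : ∀ i t, v t → Trig i t → ∃ t', t ⊆ t' ∧ Sat i t' ∧ v t')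
    (s : Finset ℕ) (hs : v s) :
    ∃ f : ℕ → Prop, (∀ n ∈ s, f n) ∧ (∀ t : Finset ℕ, (∀ n ∈ t, f n) → v t) ∧
      ∀ i (t₀ : Finset ℕ), (∀ n ∈ t₀, f n) → Trig i t₀ →
        ∃ t : Finset ℕ, (∀ n ∈ t, f n) ∧ Sat i t := by
  classical
  set seq := buildSeq σ v Sat s with hseq
  have hv : ∀ m, v (seq m) := by
    intro m
    induction m with
    | zero => exact hs
    | succ m ih =>
      show v (buildSeq σ v Sat s (m+1))
      rw [buildSeq]
      split
      · next h => exact h.choose_spec.2.2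
      · exact ih
  have hmono1 : ∀ m, seq m ⊆ seq (m + 1) := by
    intro m
    show seq m ⊆ buildSeq σ v Sat s (m+1)
    rw [buildSeq]
    split
    · next h => exact h.choose_spec.1
    · exact Finset.Subset.refl _
  have hmono : ∀ {m m'}, m ≤ m' → seq m ⊆ seq m' := by
    intro m m' h
    induction h with
    | refl => exact Finset.Subset.refl _
    | step _ ih => exact ih.trans (hmono1 _)
  have habsorb : ∀ t : Finset ℕ, (∀ n ∈ t, ∃ m, n ∈ seq m) → ∃ M, t ⊆ seq M := by
    intro t
    induction t using Finset.induction_on with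
    | empty => exact fun _ => ⟨0, Finset.empty_subset _⟩
    | @insert a t ha ih =>
      intro h
      obtain ⟨M, hM⟩ := ih (fun n hn => h n (Finset.mem_insert_of_mem hn))
      obtain ⟨m, hm⟩ := h a (Finset.mem_insert_self a t)
      refine ⟨max m M, Finset.insert_subset (hmono (le_max_left m M) hm)
        (hM.trans (hmono (le_max_right m M)))⟩
  refine ⟨fun n => ∃ m, n ∈ seq m, fun n hn => ⟨0, hn⟩, ?_, ?_⟩
  · intro t ht
    obtain ⟨M, hM⟩ := habsorb t ht
    exact hanti hM (hv M)
  · intro i t₀ ht₀ htrig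
    obtain ⟨M, hM⟩ := habsorb t₀ ht₀
    obtain ⟨m, hMm, hσm⟩ := hσ i M
    have htrigm : Trig i (seq m) := hTrig i (hM.trans (hmono hMm)) htrig
    have hfire : ∃ t', seq m ⊆ t' ∧ Sat (σ m) t' ∧ v t' := by
      rw [hσm]; exact hext i (seq m) (hv m) htrigm
    have : seq (m + 1) = hfire.choose := by
      show buildSeq σ v Sat s (m+1) = _
      rw [buildSeq]
      split
      · rfl
      · next h => exact absurd hfire h
    refine ⟨seq (m + 1), fun n hn => ⟨m + 1, hn⟩, ?_⟩
    rw [this, ← hσm]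
    exact hfire.choose_spec.2.1
  
end FLPAux

open FLPAux

/-- The fiberwise lower powerspace of a continuous map between quasi-Polish
spaces is quasi-Polish. -/
theorem flp_quasiPolish {X A : Type*} [TopologicalSpace X] [TopologicalSpace A]
    (hX : IsQuasiPolish X) (hA : IsQuasiPolish A)
    (p : A → X) (hp : Continuous p) :
    @IsQuasiPolish (FLP p) (flpTopology p) := by
  classical
  obtain ⟨SX', ⟨CX, OX, hCX, hOX, rfl⟩, ⟨φ⟩⟩ := hX
  obtain ⟨SA', ⟨CA, OA, hCA, hOA, rfl⟩, ⟨ψ⟩⟩ := hA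
  letI : TopologicalSpace (FLP p) := flpTopology p
  set SX : Set (ℕ → Prop) := ⋂ n, CX n ∪ OX n with hSXdef
  set SA : Set (ℕ → Prop) := ⋂ n, CA n ∪ OA n with hSAdef
  -- the transported projection map
  set P : ↥SA → ↥SX := fun g => φ (p (ψ.symm g)) with hPdef
  have hPcont : Continuous fun g : ↥SA => (P g).val :=
    continuous_subtype_val.comp (φ.continuous.comp (hp.comp ψ.symm.continuous))
  have hPn_open : ∀ n, IsOpen {g : ↥SA | (P g).val n} :=
    fun n => continuous_Prop.mp ((continuous_apply n).comp hPcont)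
  choose W hWopen hWspec using fun n => isOpen_induced_iff.mp (hPn_open n)
  -- the forcing relation
  set forces : Finset ℕ → ℕ → Prop :=
    fun t n => ∀ g : ↥SA, g.val ∈ upSet t → (P g).val n with hforcesdef
  have forces_mono : ∀ {t t' : Finset ℕ} {n}, t ⊆ t' → forces t n → forces t' n :=
    fun h hf g hg => hf g (upSet_anti h hg)
  have exists_forces : ∀ (g : ↥SA) n, (P g).val n →
      ∃ t, g.val ∈ upSet t ∧ forces t n := by
    intro g n hg
    have hmem : g ∈ Subtype.val ⁻¹' W n := by rw [hWspec n]; exact hg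
    obtain ⟨t, h1, h2⟩ := exists_upSet_subset (hWopen n) hmem
    refine ⟨t, h1, fun g' hg' => ?_⟩
    have : g' ∈ Subtype.val ⁻¹' W n := h2 hg'
    rw [hWspec n] at this; exact this
  -- the Π⁰₂ image set
  set E1 : Set ((ℕ → Prop) × (Finset ℕ → Prop)) :=
    ⋂ n, (Prod.fst ⁻¹' CX n) ∪ (Prod.fst ⁻¹' OX n) with hE1def
  set E2 : Set ((ℕ → Prop) × (Finset ℕ → Prop)) :=
    ⋂ st : Finset ℕ × Finset ℕ,
      (if st.1 ⊆ st.2 then {q : (ℕ → Prop) × (Finset ℕ → Prop) | ¬ q.2 st.2} else Set.univ) ∪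
      (if st.1 ⊆ st.2 then {q : (ℕ → Prop) × (Finset ℕ → Prop) | q.2 st.1} else ∅) with hE2def
  set E3 : Set ((ℕ → Prop) × (Finset ℕ → Prop)) :=
    ⋂ tn : Finset ℕ × ℕ,
      (if forces tn.1 tn.2 then {q : (ℕ → Prop) × (Finset ℕ → Prop) | ¬ q.2 tn.1} else Set.univ) ∪
      (if forces tn.1 tn.2 then {q : (ℕ → Prop) × (Finset ℕ → Prop) | q.1 tn.2} else ∅) with hE3def
  set E4 : Set ((ℕ → Prop) × (Finset ℕ → Prop)) :=
    ⋂ ti : Finset ℕ × ℕ,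
      (if (fun n => n ∈ ti.1 : ℕ → Prop) ∈ (CA ti.2)ᶜ then
        {q : (ℕ → Prop) × (Finset ℕ → Prop) | ¬ q.2 ti.1} else Set.univ) ∪
      (if (fun n => n ∈ ti.1 : ℕ → Prop) ∈ (CA ti.2)ᶜ then
        {q : (ℕ → Prop) × (Finset ℕ → Prop) |
          ∃ t', (ti.1 ⊆ t' ∧ (fun n => n ∈ t' : ℕ → Prop) ∈ OA ti.2) ∧ q.2 t'} else ∅) with hE4def
  set E5 : Set ((ℕ → Prop) × (Finset ℕ → Prop)) :=
    ⋂ tn : Finset ℕ × ℕ,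
      {q : (ℕ → Prop) × (Finset ℕ → Prop) | q.2 tn.1 ∧ q.1 tn.2}ᶜ ∪
      {q : (ℕ → Prop) × (Finset ℕ → Prop) |
        ∃ t', (tn.1 ⊆ t' ∧ forces t' tn.2) ∧ q.2 t'} with hE5def
  set E : Set ((ℕ → Prop) × (Finset ℕ → Prop)) := E1 ∩ (E2 ∩ (E3 ∩ (E4 ∩ E5))) with hEdef
  -- basic openness facts
  have hopen_snd : ∀ t : Finset ℕ, IsOpen {q : (ℕ → Prop) × (Finset ℕ → Prop) | q.2 t} :=
    fun t => continuous_Prop.mp ((continuous_apply t).comp continuous_snd)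
  have hopen_fst : ∀ n : ℕ, IsOpen {q : (ℕ → Prop) × (Finset ℕ → Prop) | q.1 n} :=
    fun n => continuous_Prop.mp ((continuous_apply n).comp continuous_fst)
  have hclosed_nsnd : ∀ t : Finset ℕ,
      IsClosed {q : (ℕ → Prop) × (Finset ℕ → Prop) | ¬ q.2 t} := by
    intro t
    have : {q : (ℕ → Prop) × (Finset ℕ → Prop) | ¬ q.2 t}
        = {q : (ℕ → Prop) × (Finset ℕ → Prop) | q.2 t}ᶜ := rfl
    rw [this]
    exact (hopen_snd t).isClosed_compl
  have hopen_exists : ∀ c : Finset ℕ → Prop,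
      IsOpen {q : (ℕ → Prop) × (Finset ℕ → Prop) | ∃ t', c t' ∧ q.2 t'} := by
    intro c
    have : {q : (ℕ → Prop) × (Finset ℕ → Prop) | ∃ t', c t' ∧ q.2 t'}
        = ⋃ t', ⋃ (_ : c t'), {q : (ℕ → Prop) × (Finset ℕ → Prop) | q.2 t'} := by
      ext q; simp
    rw [this]
    exact isOpen_iUnion fun t' => isOpen_iUnion fun _ => hopen_snd t'
  have hEpi : IsPi02 E := by
    refine IsPi02.interPi02 ?_ (IsPi02.interPi02 ?_ (IsPi02.interPi02 ?_
      (IsPi02.interPi02 ?_ ?_)))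
    · exact isPi02_iInter (fun n => (hCX n).preimage continuous_fst)
        (fun n => (hOX n).preimage continuous_fst)
    · refine isPi02_iInter (fun st => ?_) (fun st => ?_)
      · split
        · exact hclosed_nsnd _
        · exact isClosed_univ
      · split
        · exact hopen_snd _
        · exact isOpen_empty
    · refine isPi02_iInter (fun tn => ?_) (fun tn => ?_)
      · split
        · exact hclosed_nsnd _
        · exact isClosed_univ
      · split
        · exact hopen_fst _
        · exact isOpen_empty
    · refine isPi02_iInter (fun ti => ?_) (fun ti => ?_)
      · split
        · exact hclosed_nsnd _
        · exact isClosed_univ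
      · split
        · exact hopen_exists _
        · exact isOpen_empty
    · refine isPi02_iInter (fun tn => ?_) (fun tn => ?_)
      · have : {q : (ℕ → Prop) × (Finset ℕ → Prop) | q.2 tn.1 ∧ q.1 tn.2}
            = {q : (ℕ → Prop) × (Finset ℕ → Prop) | q.2 tn.1}
              ∩ {q : (ℕ → Prop) × (Finset ℕ → Prop) | q.1 tn.2} := rfl
        rw [this]
        exact ((hopen_snd tn.1).inter (hopen_fst tn.2)).isClosed_compl
      · exact hopen_exists _
  -- extraction lemmas for membership in E
  have hE_1 : ∀ q, q ∈ E → q.1 ∈ SX := by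
    intro q hq
    have h1 := hq.1
    rw [hE1def] at h1
    rw [hSXdef]
    simp only [mem_iInter, mem_union, mem_preimage] at h1 ⊢
    exact h1
  have hE_2 : ∀ q, q ∈ E → ∀ (t t' : Finset ℕ), t ⊆ t' → q.2 t' → q.2 t := by
    intro q hq t t' hsub hqt'
    have h2 := hq.2.1
    rw [hE2def] at h2
    have h := mem_iInter.mp h2 (t, t')
    dsimp only at h
    rw [if_pos hsub, if_pos hsub] at h
    rcases h with h | h
    · exact absurd hqt' h
    · exact h
  have hE_3 : ∀ q, q ∈ E → ∀ (t : Finset ℕ) n, forces t n → q.2 t → q.1 n := by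
    intro q hq t n hf hqt
    have h3 := hq.2.2.1
    rw [hE3def] at h3
    have h := mem_iInter.mp h3 (t, n)
    dsimp only at h
    rw [if_pos hf, if_pos hf] at h
    rcases h with h | h
    · exact absurd hqt h
    · exact h
  have hE_4 : ∀ q, q ∈ E → ∀ (t : Finset ℕ) i,
      (fun n => n ∈ t : ℕ → Prop) ∈ (CA i)ᶜ → q.2 t →
      ∃ t', (t ⊆ t' ∧ (fun n => n ∈ t' : ℕ → Prop) ∈ OA i) ∧ q.2 t' := by
    intro q hq t i hc hqt
    have h4 := hq.2.2.2.1
    rw [hE4def] at h4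
    have h := mem_iInter.mp h4 (t, i)
    dsimp only at h
    rw [if_pos hc, if_pos hc] at h
    rcases h with h | h
    · exact absurd hqt h
    · exact h
  have hE_5 : ∀ q, q ∈ E → ∀ (t : Finset ℕ) n, q.2 t → q.1 n →
      ∃ t', (t ⊆ t' ∧ forces t' n) ∧ q.2 t' := by
    intro q hq t n hqt hqn
    have h5 := hq.2.2.2.2
    rw [hE5def] at h5
    have h := mem_iInter.mp h5 (t, n)
    dsimp only at h
    rcases h with h | h
    · exact absurd ⟨hqt, hqn⟩ h
    · exact h
  -- the key construction: building points of the fiber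
  have key_build : ∀ q, q ∈ E → ∀ s : Finset ℕ, q.2 s →
      ∃ g : ↥SA, g.val ∈ upSet s ∧ (∀ n, (P g).val n ↔ q.1 n) ∧
        (∀ t : Finset ℕ, g.val ∈ upSet t → q.2 t) := by
    intro q hq s hqs
    set σ : ℕ → ℕ ⊕ ℕ := fun m => (Denumerable.eqv (ℕ ⊕ ℕ)).symm (Nat.unpair m).1 with hσdef
    have hσ : ∀ i M, ∃ m, M ≤ m ∧ σ m = i := by
      intro i M
      refine ⟨Nat.pair ((Denumerable.eqv (ℕ ⊕ ℕ)) i) M, Nat.right_le_pair _ _, ?_⟩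
      rw [hσdef]
      simp [Nat.unpair_pair]
    obtain ⟨f, hf1, hf2, hf3⟩ := exists_limit σ hσ q.2 (fun t t' hsub hv => hE_2 q hq t t' hsub hv)
      (Sum.elim (fun i t => (fun n => n ∈ t : ℕ → Prop) ∈ (CA i)ᶜ) (fun n _ => q.1 n))
      (Sum.elim (fun i t => (fun n => n ∈ t : ℕ → Prop) ∈ OA i) (fun n t => forces t n))
      (by
        rintro (i | n) t t' hsub htrig
        · exact isOpen_upper (hCA i).isOpen_compl htrig (fun n hn => hsub hn)
        · exact htrig)
      (by
        rintro (i | n) t hv htrig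
        · obtain ⟨t', ⟨h1, h2⟩, h3⟩ := hE_4 q hq t i htrig hv
          exact ⟨t', h1, h2, h3⟩
        · obtain ⟨t', ⟨h1, h2⟩, h3⟩ := hE_5 q hq t n hv htrig
          exact ⟨t', h1, h2, h3⟩)
      s hqs
    have hfSA : f ∈ SA := by
      rw [hSAdef]
      refine mem_iInter.mpr fun i => ?_
      by_cases hc : f ∈ CA i
      · exact Or.inl hc
      · obtain ⟨t, hft, hsub⟩ := exists_upSet_subset (hCA i).isOpen_compl hc
        have htrig : (fun n => n ∈ t : ℕ → Prop) ∈ (CA i)ᶜ := hsub (chi_mem_upSet t)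
        obtain ⟨t₂, ht₂f, hsat⟩ := hf3 (Sum.inl i) t hft htrig
        exact Or.inr (isOpen_upper (hOA i) hsat ht₂f)
    refine ⟨⟨f, hfSA⟩, hf1, fun n => ⟨?_, ?_⟩, hf2⟩
    · intro h
      obtain ⟨t, hgt, hforce⟩ := exists_forces ⟨f, hfSA⟩ n h
      exact hE_3 q hq t n hforce (hf2 t hgt)
    · intro h
      obtain ⟨t, htf, hforce⟩ := hf3 (Sum.inr n) ∅
        (fun m hm => absurd hm (Finset.notMem_empty m)) h
      exact hforce ⟨f, hfSA⟩ htf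
  -- necessity: the image of a point of FLP lies in E
  have heE : ∀ z : FLP p,
      (((φ z.val.1).val, fun s : Finset ℕ => ∃ a ∈ z.val.2, (ψ a).val ∈ upSet s) :
        (ℕ → Prop) × (Finset ℕ → Prop)) ∈ E := by
    rintro ⟨⟨x, F⟩, hz⟩
    have hpa : ∀ a ∈ F, p a = x := fun a ha => hz.1 ha
    have hPψ : ∀ a ∈ F, P (ψ a) = φ x := by
      intro a ha
      rw [hPdef]
      simp only [Homeomorph.symm_apply_apply]
      rw [hpa a ha]
    refine ⟨?_, ?_, ?_, ?_, ?_⟩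
    · rw [hE1def]
      refine mem_iInter.mpr fun n => ?_
      have := mem_iInter.mp ((φ x).2 : (φ x).val ∈ ⋂ n, CX n ∪ OX n) n
      simp only [mem_union, mem_preimage]
      exact this
    · rw [hE2def]
      refine mem_iInter.mpr fun st => ?_
      by_cases hsub : st.1 ⊆ st.2
      · rw [if_pos hsub, if_pos hsub]
        by_cases hv : ∃ a ∈ F, (ψ a).val ∈ upSet st.2
        · obtain ⟨a, haF, hau⟩ := hv
          exact Or.inr ⟨a, haF, upSet_anti hsub hau⟩
        · exact Or.inl hv
      · rw [if_neg hsub]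
        exact Or.inl (mem_univ _)
    · rw [hE3def]
      refine mem_iInter.mpr fun tn => ?_
      by_cases hf : forces tn.1 tn.2
      · rw [if_pos hf, if_pos hf]
        by_cases hv : ∃ a ∈ F, (ψ a).val ∈ upSet tn.1
        · obtain ⟨a, haF, hau⟩ := hv
          refine Or.inr ?_
          have := hf (ψ a) hau
          rwa [hPψ a haF] at this
        · exact Or.inl hv
      · rw [if_neg hf]
        exact Or.inl (mem_univ _)
    · rw [hE4def]
      refine mem_iInter.mpr fun ti => ?_
      by_cases hc : (fun n => n ∈ ti.1 : ℕ → Prop) ∈ (CA ti.2)ᶜ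
      · rw [if_pos hc, if_pos hc]
        by_cases hv : ∃ a ∈ F, (ψ a).val ∈ upSet ti.1
        · obtain ⟨a, haF, hau⟩ := hv
          refine Or.inr ?_
          have hanotC : (ψ a).val ∈ (CA ti.2)ᶜ :=
            isOpen_upper (hCA ti.2).isOpen_compl hc (fun n hn => hau n hn)
          have haOA : (ψ a).val ∈ OA ti.2 := by
            rcases mem_iInter.mp ((ψ a).2 : (ψ a).val ∈ ⋂ n, CA n ∪ OA n) ti.2 with h | h
            · exact absurd h hanotC
            · exact h
          obtain ⟨w, hw1, hw2⟩ := exists_upSet_subset (hOA ti.2) haOA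
          refine ⟨ti.1 ∪ w, ⟨Finset.subset_union_left, hw2 ?_⟩, a, haF, ?_⟩
          · intro n hn
            exact Finset.mem_union_right _ hn
          · intro n hn
            rcases Finset.mem_union.mp hn with h | h
            · exact hau n h
            · exact hw1 n h
        · exact Or.inl hv
      · rw [if_neg hc]
        exact Or.inl (mem_univ _)
    · rw [hE5def]
      refine mem_iInter.mpr fun tn => ?_
      by_cases hv : (∃ a ∈ F, (ψ a).val ∈ upSet tn.1) ∧ (φ x).val tn.2
      · obtain ⟨⟨a, haF, hau⟩, hxn⟩ := hv
        refine Or.inr ?_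
        have hPn : (P (ψ a)).val tn.2 := by rw [hPψ a haF]; exact hxn
        obtain ⟨w, hw1, hw2⟩ := exists_forces (ψ a) tn.2 hPn
        refine ⟨tn.1 ∪ w, ⟨Finset.subset_union_left,
          forces_mono Finset.subset_union_right hw2⟩, a, haF, ?_⟩
        intro n hn
        rcases Finset.mem_union.mp hn with h | h
        · exact hau n h
        · exact hw1 n h
      · exact Or.inl hv
  -- the candidate closed set associated to a point of E
  set Fq : ((ℕ → Prop) × (Finset ℕ → Prop)) → Set A := fun q =>
    {a | (φ (p a)).val = q.1 ∧ ∀ t : Finset ℕ, (ψ a).val ∈ upSet t → q.2 t} with hFqdef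
  have hFqx : ∀ q (hq : q ∈ E), ∀ a, a ∈ Fq q → p a = φ.symm ⟨q.1, hE_1 q hq⟩ := by
    intro q hq a ha
    rw [hFqdef] at ha
    have h1 : φ (p a) = (⟨q.1, hE_1 q hq⟩ : ↥SX) := Subtype.ext ha.1
    rw [← h1, Homeomorph.symm_apply_apply]
  have hFib : ∀ q (hq : q ∈ E), FibClosed p (φ.symm ⟨q.1, hE_1 q hq⟩, Fq q) := by
    intro q hq
    refine ⟨fun a ha => hFqx q hq a ha, ?_⟩
    dsimp only
    have hKeq : (Subtype.val : ↥(p ⁻¹' {φ.symm ⟨q.1, hE_1 q hq⟩}) → A) ⁻¹' Fq q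
        = (fun a' : ↥(p ⁻¹' {φ.symm ⟨q.1, hE_1 q hq⟩}) => (ψ a'.val).val) ⁻¹'
          (⋂ t ∈ {t : Finset ℕ | ¬ q.2 t}, (upSet t)ᶜ) := by
      ext a'
      constructor
      · intro ha'
        rw [mem_preimage, hFqdef] at ha'
        exact mem_iInter₂.mpr fun t ht hup => ht (ha'.2 t hup)
      · intro ha'
        rw [mem_preimage, hFqdef]
        have hfib : p a'.val = φ.symm ⟨q.1, hE_1 q hq⟩ := a'.2
        refine ⟨?_, ?_⟩
        · rw [hfib, Homeomorph.apply_symm_apply]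
        · intro t hup
          by_contra hqt
          exact (mem_iInter₂.mp ha' t hqt) hup
    rw [hKeq]
    exact IsClosed.preimage
      (continuous_subtype_val.comp (ψ.continuous.comp continuous_subtype_val))
      (isClosed_biInter fun t ht => (isOpen_upSet t).isClosed_compl)
  -- right inverse
  have hRight : ∀ q (hq : q ∈ E),
      (((φ (φ.symm ⟨q.1, hE_1 q hq⟩)).val,
        fun s : Finset ℕ => ∃ a ∈ Fq q, (ψ a).val ∈ upSet s) :
          (ℕ → Prop) × (Finset ℕ → Prop)) = q := by
    intro q hq
    have h1 : (φ (φ.symm ⟨q.1, hE_1 q hq⟩)).val = q.1 := by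
      rw [Homeomorph.apply_symm_apply]
    refine Prod.ext h1 ?_
    funext s
    refine propext ⟨?_, ?_⟩
    · rintro ⟨a, haF, hau⟩
      rw [hFqdef] at haF
      exact haF.2 s hau
    · intro hqs
      obtain ⟨g, hg1, hg2, hg3⟩ := key_build q hq s hqs
      refine ⟨ψ.symm g, ?_, ?_⟩
      · rw [hFqdef]
        refine ⟨?_, ?_⟩
        · have hPg : P g = φ (p (ψ.symm g)) := by rw [hPdef]
          rw [← hPg]
          exact funext fun n => propext (hg2 n)
        · intro t hup
          rw [Homeomorph.apply_symm_apply] at hup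
          exact hg3 t hup
      · rw [Homeomorph.apply_symm_apply]
        exact hg1
  -- left inverse
  have hLeft : ∀ (z : FLP p) (h : (φ z.val.1).val ∈ SX),
      ((φ.symm ⟨(φ z.val.1).val, h⟩,
        Fq ((φ z.val.1).val, fun s : Finset ℕ => ∃ a ∈ z.val.2, (ψ a).val ∈ upSet s)) :
          X × Set A) = z.val := by
    rintro ⟨⟨x, F⟩, hz⟩ h
    have hx : φ.symm ⟨(φ x).val, h⟩ = x := by
      have hh : (⟨(φ x).val, h⟩ : ↥SX) = φ x := Subtype.ext rfl
      rw [hh, Homeomorph.symm_apply_apply]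
    refine Prod.ext hx ?_
    rw [hFqdef]
    ext a
    simp only [mem_setOf_eq]
    constructor
    · rintro ⟨h1, h2⟩
      by_contra haF
      have hpa : p a = x := φ.injective (Subtype.ext h1)
      have hafib : a ∈ p ⁻¹' {x} := by simp [hpa]
      obtain ⟨WA, hWAopen, hWAspec⟩ := isOpen_induced_iff.mp hz.2.isOpen_compl
      have haWA : a ∈ WA := by
        have : (⟨a, hafib⟩ : ↥(p ⁻¹' {x})) ∈ Subtype.val ⁻¹' WA := by
          rw [hWAspec]
          exact fun hmem => haF hmem
        exact this
      obtain ⟨W', hW'open, hW'spec⟩ :=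
        isOpen_induced_iff.mp (hWAopen.preimage ψ.symm.continuous)
      have haW' : (ψ a).val ∈ W' := by
        have : ψ a ∈ Subtype.val ⁻¹' W' := by
          rw [hW'spec]
          show ψ.symm (ψ a) ∈ WA
          rw [Homeomorph.symm_apply_apply]
          exact haWA
        exact this
      obtain ⟨t, ht1, ht2⟩ := exists_upSet_subset hW'open haW'
      obtain ⟨b, hbF, hbt⟩ := h2 t ht1
      have hbW' : ψ b ∈ Subtype.val ⁻¹' W' := ht2 hbt
      rw [hW'spec] at hbW'
      have hbWA : b ∈ WA := by
        have hb2 : ψ.symm (ψ b) ∈ WA := hbW'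
        rwa [Homeomorph.symm_apply_apply] at hb2
      have hbfib : b ∈ p ⁻¹' {x} := hz.1 hbF
      have : (⟨b, hbfib⟩ : ↥(p ⁻¹' {x})) ∈ Subtype.val ⁻¹' WA := hbWA
      rw [hWAspec] at this
      exact this hbF
    · intro haF
      refine ⟨?_, fun t hup => ⟨a, haF, hup⟩⟩
      have hpa : p a = x := hz.1 haF
      rw [hpa]
  -- the equivalence
  let eqv : FLP p ≃ ↥E :=
    { toFun := fun z => ⟨((φ z.val.1).val,
        fun s : Finset ℕ => ∃ a ∈ z.val.2, (ψ a).val ∈ upSet s), heE z⟩,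
      invFun := fun w => ⟨(φ.symm ⟨w.val.1, hE_1 w.val w.2⟩, Fq w.val), hFib w.val w.2⟩,
      left_inv := fun z => Subtype.ext (hLeft z (hE_1 _ (heE z))),
      right_inv := fun w => Subtype.ext (hRight w.val w.2) }
  -- continuity of the forward map
  have hGenOpen : ∀ s ∈ ({W | ∃ U : Set X, IsOpen U ∧ W = {q : FLP p | q.val.1 ∈ U}} ∪
      {W | ∃ S : Set A, IsOpen S ∧ W = {q : FLP p | (q.val.2 ∩ S).Nonempty}} :
        Set (Set (FLP p))), IsOpen s :=
    fun s hs => TopologicalSpace.isOpen_generateFrom_of_mem hs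
  have hcontTo : Continuous fun z : FLP p =>
      (⟨((φ z.val.1).val, fun s : Finset ℕ => ∃ a ∈ z.val.2, (ψ a).val ∈ upSet s),
        heE z⟩ : ↥E) := by
    refine Continuous.subtype_mk (Continuous.prodMk ?_ ?_) _
    · refine continuous_pi fun n => continuous_Prop.mpr ?_
      exact hGenOpen _ (Or.inl ⟨{x | (φ x).val n},
        continuous_Prop.mp ((continuous_apply n).comp
          (continuous_subtype_val.comp φ.continuous)), rfl⟩)
    · refine continuous_pi fun s => continuous_Prop.mpr ?_
      exact hGenOpen _ (Or.inr ⟨{a | (ψ a).val ∈ upSet s},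
        IsOpen.preimage (continuous_subtype_val.comp ψ.continuous) (isOpen_upSet s), rfl⟩)
  -- continuity of the inverse map
  have hcontInv : Continuous[instTopologicalSpaceSubtype, flpTopology p] (fun w : ↥E =>
      (⟨(φ.symm ⟨w.val.1, hE_1 w.val w.2⟩, Fq w.val), hFib w.val w.2⟩ : FLP p)) := by
    refine continuous_generateFrom_iff.mpr ?_
    rintro G (⟨U, hU, rfl⟩ | ⟨S, hS, rfl⟩)
    · obtain ⟨WX, hWXopen, hWXspec⟩ := isOpen_induced_iff.mp (hU.preimage φ.symm.continuous)
      have hpre : (fun w : ↥E =>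
          (⟨(φ.symm ⟨w.val.1, hE_1 w.val w.2⟩, Fq w.val), hFib w.val w.2⟩ : FLP p))
          ⁻¹' {q : FLP p | q.val.1 ∈ U} = (fun w : ↥E => w.val.1) ⁻¹' WX := by
        ext w
        simp only [mem_preimage, mem_setOf_eq]
        constructor
        · intro h
          have hmem : (⟨w.val.1, hE_1 w.val w.2⟩ : ↥SX) ∈ Subtype.val ⁻¹' WX := by
            rw [hWXspec]
            exact h
          exact hmem
        · intro h
          have hmem : (⟨w.val.1, hE_1 w.val w.2⟩ : ↥SX) ∈ φ.symm ⁻¹' U := by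
            rw [← hWXspec]
            exact h
          exact hmem
      refine (congrArg IsOpen hpre).mpr ?_
      exact hWXopen.preimage (continuous_fst.comp continuous_subtype_val)
    · obtain ⟨WS, hWSopen, hWSspec⟩ := isOpen_induced_iff.mp (hS.preimage ψ.symm.continuous)
      have hpre : (fun w : ↥E =>
          (⟨(φ.symm ⟨w.val.1, hE_1 w.val w.2⟩, Fq w.val), hFib w.val w.2⟩ : FLP p))
          ⁻¹' {q : FLP p | (q.val.2 ∩ S).Nonempty}
          = ⋃ t : Finset ℕ, ⋃ (_ : upSet t ⊆ WS), {w : ↥E | w.val.2 t} := by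
        ext w
        simp only [mem_preimage, mem_setOf_eq, mem_iUnion]
        constructor
        · rintro ⟨a, haFq, haS⟩
          have h1 : ψ a ∈ Subtype.val ⁻¹' WS := by
            rw [hWSspec]
            show ψ.symm (ψ a) ∈ S
            rw [Homeomorph.symm_apply_apply]
            exact haS
          obtain ⟨t, ht1, ht2⟩ := exists_upSet_subset hWSopen h1
          exact ⟨t, ht2, haFq.2 t ht1⟩
        · rintro ⟨t, htWS, hwt⟩
          obtain ⟨g, hg1, hg2, hg3⟩ := key_build w.val w.2 t hwt
          refine ⟨ψ.symm g, ?_, ?_⟩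
          · refine ⟨?_, ?_⟩
            · have hPg : P g = φ (p (ψ.symm g)) := by rw [hPdef]
              rw [← hPg]
              exact funext fun n => propext (hg2 n)
            · intro t' hup
              rw [Homeomorph.apply_symm_apply] at hup
              exact hg3 t' hup
          · have hgW : g ∈ Subtype.val ⁻¹' WS := htWS hg1
            rw [hWSspec] at hgW
            exact hgW
      refine (congrArg IsOpen hpre).mpr ?_
      exact isOpen_iUnion fun t => isOpen_iUnion fun _ =>
        continuous_Prop.mp ((continuous_apply t).comp
          (continuous_snd.comp continuous_subtype_val))
  exact isQuasiPolish_of_pi02 prodHomeo hEpi ⟨Homeomorph.mk eqv hcontTo hcontInv⟩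
end

section
/- Every second-countable metric-étale space over a quasi-Polish space is quasi-Polish. -/
open Set Topology

/-! ### Topometric and metric-étale spaces. -/

/-- The data `(d, p)` makes a topological space `A` into a metric-étale space
over `X`: `A` is a complete topometric space with metric `d` of diameter ≤ 1,
`p` is a topologically open continuous map, `d` is discrete between distinct
fibers, and for each `r > 0` the set `{(a,b) ∈ A ×_X A : d(a,b) < r}` is open
in the fiber product. -/
structure IsMetricEtale {A X : Type*} [TopologicalSpace A] [TopologicalSpace X]
    (d : A → A → ℝ) (p : A → X) : Prop where
  d_nonneg : ∀ a b, 0 ≤ d a b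
  d_le_one : ∀ a b, d a b ≤ 1
  d_self : ∀ a, d a a = 0
  d_eq_zero : ∀ a b, d a b = 0 → a = b
  d_symm : ∀ a b, d a b = d b a
  d_triangle : ∀ a b c, d a c ≤ d a b + d b c
  complete : ∀ u : ℕ → A,
    (∀ ε : ℝ, 0 < ε → ∃ N, ∀ m ≥ N, ∀ n ≥ N, d (u m) (u n) < ε) →
    ∃ a, ∀ ε : ℝ, 0 < ε → ∃ N, ∀ n ≥ N, d (u n) a < ε
  topometric : ∀ V : Set A, IsOpen V → ∃ U : A → ℝ,
    (∀ r : ℝ, IsOpen {a | U a < r}) ∧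
    (∀ a, U a = ⨅ b, min 1 (d a b + U b)) ∧
    V = {a | U a < 1}
  proj_cont : Continuous p
  proj_open : IsOpenMap p
  d_fiber : ∀ a b, p a ≠ p b → d a b = 1
  d_open : ∀ r : ℝ, 0 < r →
    IsOpen {q : {q : A × A // p q.1 = p q.2} | d q.val.1 q.val.2 < r}

private lemma min1_add_le {c t : ℝ} (hc : 0 ≤ c) : min 1 (c + t) ≤ c + min 1 t := by
  rcases le_total t 1 with h | h
  · rw [min_eq_right h]; exact min_le_right _ _
  · calc min 1 (c + t) ≤ 1 := min_le_left _ _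
      _ ≤ c + 1 := by linarith
      _ = c + min 1 t := by rw [min_eq_left h]

private lemma grey_le {A : Type*} (d : A → A → ℝ) (hd0 : ∀ a b, 0 ≤ d a b)
    (htri : ∀ a b c, d a c ≤ d a b + d b c)
    (U : A → ℝ) (inv : ∀ a, U a = ⨅ b, min 1 (d a b + U b)) (a b : A) :
    U a ≤ min 1 (d a b + U b) := by
  by_cases H : ∀ x, BddBelow (Set.range fun y => min 1 (d x y + U y))
  · rw [inv a]; exact ciInf_le (H a) b
  · push_neg at H
    obtain ⟨x0, hx0⟩ := H
    have hnb : ∀ x, ¬ BddBelow (Set.range fun y => min 1 (d x y + U y)) := by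
      intro x hx
      apply hx0
      obtain ⟨M, hM⟩ := hx
      refine ⟨M - d x x0, ?_⟩
      rintro _ ⟨y, rfl⟩
      have h2 : M ≤ min 1 (d x y + U y) := hM ⟨y, rfl⟩
      have h1 : min 1 (d x y + U y) ≤ d x x0 + min 1 (d x0 y + U y) := by
        calc min 1 (d x y + U y) ≤ min 1 (d x x0 + (d x0 y + U y)) := by
              apply min_le_min le_rfl
              have := htri x x0 y; linarith
          _ ≤ d x x0 + min 1 (d x0 y + U y) := min1_add_le (hd0 _ _)
      simp only
      linarith
    have hU0 : ∀ x, U x = 0 := fun x => by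
      rw [inv x]; exact Real.iInf_of_not_bddBelow (hnb x)
    rw [hU0 a, hU0 b]
    exact le_min (by norm_num) (by linarith [hd0 a b])

private lemma isPi02_iInter {X : Type*} [TopologicalSpace X] {ι : Type*} [Countable ι]
    {C O : ι → Set X} (hC : ∀ i, IsClosed (C i)) (hO : ∀ i, IsOpen (O i)) :
    IsPi02 (⋂ i, C i ∪ O i) := by
  obtain ⟨f, hf⟩ := Countable.exists_injective_nat ι
  refine ⟨fun n => ⋂ i ∈ {i | f i = n}, C i, fun n => ⋃ i ∈ {i | f i = n}, O i,
    fun n => isClosed_biInter fun i _ => hC i, fun n => isOpen_biUnion fun i _ => hO i, ?_⟩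
  apply Subset.antisymm
  · intro x hx
    apply mem_iInter.mpr; intro n
    by_cases hn : ∃ i, f i = n
    · obtain ⟨i, rfl⟩ := hn
      rcases mem_iInter.mp hx i with hxc | hxo
      · exact mem_union_left _ (mem_iInter₂.mpr fun i' hi' => by rw [hf hi']; exact hxc)
      · exact mem_union_right _ (mem_iUnion₂.mpr ⟨i, rfl, hxo⟩)
    · exact mem_union_left _ (mem_iInter₂.mpr fun i hi => absurd ⟨i, hi⟩ hn)
  · intro x hx
    apply mem_iInter.mpr; intro i
    rcases mem_iInter.mp hx (f i) with hxc | hxo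
    · exact mem_union_left _ (mem_iInter₂.mp hxc i rfl)
    · obtain ⟨i', hi', hx'⟩ := mem_iUnion₂.mp hxo
      exact mem_union_right _ ((hf hi') ▸ hx')

private lemma isPi02_inter {X : Type*} [TopologicalSpace X] {s t : Set X}
    (hs : IsPi02 s) (ht : IsPi02 t) : IsPi02 (s ∩ t) := by
  obtain ⟨C1, O1, hC1, hO1, rfl⟩ := hs
  obtain ⟨C2, O2, hC2, hO2, rfl⟩ := ht
  have heq : (⋂ n, C1 n ∪ O1 n) ∩ (⋂ n, C2 n ∪ O2 n)
      = ⋂ i : ℕ ⊕ ℕ, (Sum.elim C1 C2 i ∪ Sum.elim O1 O2 i) := by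
    ext x
    simp only [mem_inter_iff, mem_iInter, Sum.forall, Sum.elim_inl, Sum.elim_inr]
  rw [heq]
  exact isPi02_iInter
    (fun i => by cases i with | inl i => exact hC1 i | inr i => exact hC2 i)
    (fun i => by cases i with | inl i => exact hO1 i | inr i => exact hO2 i)

private lemma isPi02_preimage {X Y : Type*} [TopologicalSpace X] [TopologicalSpace Y]
    {f : X → Y} (hf : Continuous f) {s : Set Y} (hs : IsPi02 s) : IsPi02 (f ⁻¹' s) := by
  obtain ⟨C, O, hC, hO, rfl⟩ := hs
  exact ⟨fun n => f ⁻¹' C n, fun n => f ⁻¹' O n, fun n => (hC n).preimage hf,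
    fun n => (hO n).preimage hf, by simp [preimage_iInter, preimage_union]⟩

private lemma isPi02_image {X Y : Type*} [TopologicalSpace X] [TopologicalSpace Y]
    (e : X ≃ₜ Y) {s : Set X} (hs : IsPi02 s) : IsPi02 (e '' s) := by
  have : e '' s = e.symm ⁻¹' s := by
    ext y
    constructor
    · rintro ⟨x, hx, rfl⟩; simpa using hx
    · intro hy; exact ⟨e.symm y, hy, e.apply_symm_apply y⟩
  rw [this]
  exact isPi02_preimage e.symm.continuous hs

private abbrev Tz : Type := (ℕ → Prop) × (ℕ × ℚ → Prop)
private abbrev Lc : Type := List ℕ × List (ℕ × ℚ)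

private def satC (c : Lc) (z : Tz) : Prop :=
  (∀ i ∈ c.1, z.1 i) ∧ ∀ kq ∈ c.2, z.2 kq

private def extC (c c' : Lc) : Prop :=
  (∀ i ∈ c.1, i ∈ c'.1) ∧ ∀ kq ∈ c.2, kq ∈ c'.2

private lemma extC_refl (c : Lc) : extC c c := ⟨fun _ hi => hi, fun _ hk => hk⟩

private lemma extC_trans {c c' c'' : Lc} (h1 : extC c c') (h2 : extC c' c'') : extC c c'' :=
  ⟨fun i hi => h2.1 i (h1.1 i hi), fun kq hkq => h2.2 kq (h1.2 kq hkq)⟩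

private lemma satC_of_ext {c c' : Lc} {z : Tz} (he : extC c c') (hs : satC c' z) : satC c z :=
  ⟨fun i hi => hs.1 i (he.1 i hi), fun kq hkq => hs.2 kq (he.2 kq hkq)⟩

open Classical in
private noncomputable def insD (z : Tz) (kq : ℕ × ℚ) (c : Lc) : Lc :=
  if z.2 kq then (c.1, kq :: c.2) else c

private lemma insD_ext (z : Tz) (kq : ℕ × ℚ) (c : Lc) : extC c (insD z kq c) := by
  unfold insD
  split_ifs with hz
  · exact ⟨fun i hi => hi, fun kq' hkq' => List.mem_cons_of_mem _ hkq'⟩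
  · exact extC_refl c

private lemma insD_sat (z : Tz) (kq : ℕ × ℚ) (c : Lc) (hc : satC c z) : satC (insD z kq c) z := by
  unfold insD
  split_ifs with hz
  · refine ⟨hc.1, fun kq' hkq' => ?_⟩
    rcases List.mem_cons.mp hkq' with rfl | hh
    · exact hz
    · exact hc.2 kq' hh
  · exact hc

private lemma insD_pos (z : Tz) (kq : ℕ × ℚ) (c : Lc) (hz : z.2 kq) :
    kq ∈ (insD z kq c).2 := by
  unfold insD
  rw [if_pos hz]
  exact List.mem_cons_self

private def smallP {A X : Type*} (d : A → A → ℝ) (p : A → X) (V : ℕ → Set A) (n j : ℕ) : Prop :=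
  ∀ b b', b ∈ V j → b' ∈ V j → p b = p b' → d b b' < (2⁻¹ : ℝ) ^ n

private def eMap {A X : Type*} [TopologicalSpace X] {S : Set (ℕ → Prop)}
    (h : X ≃ₜ ↥S) (U : ℕ → A → ℝ) (p : A → X) (a : A) : Tz :=
  ((h (p a)).1, fun kq => U kq.1 a < (kq.2 : ℝ))

/-- Every second-countable metric-étale space over a quasi-Polish space is
quasi-Polish. -/
theorem metricEtale_quasiPolish {A X : Type*}
    [TopologicalSpace A] [TopologicalSpace X]
    (hX : IsQuasiPolish X) (d : A → A → ℝ) (p : A → X)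
    (hme : IsMetricEtale d p) (hsc : SecondCountableTopology A) :
    IsQuasiPolish A := by
  classical
  obtain ⟨S, hSpi, ⟨h⟩⟩ := hX
  obtain ⟨bas, hbc, -, hbb⟩ := TopologicalSpace.exists_countable_basis A
  obtain ⟨V, hV⟩ : ∃ V : ℕ → Set A, insert ∅ bas = Set.range V :=
    (hbc.insert ∅).exists_eq_range (insert_nonempty _ _)
  have hVopen : ∀ j, IsOpen (V j) := by
    intro j
    have hj : V j ∈ insert ∅ bas := by rw [hV]; exact mem_range_self j
    rcases mem_insert_iff.mp hj with hj | hj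
    · rw [hj]; exact isOpen_empty
    · exact hbb.isOpen hj
  have hVbasis : ∀ W : Set A, IsOpen W → ∀ a ∈ W, ∃ j, a ∈ V j ∧ V j ⊆ W := by
    intro W hW a ha
    obtain ⟨t, htb, hat, htW⟩ := hbb.exists_subset_of_mem_open ha hW
    have ht : t ∈ Set.range V := by rw [← hV]; exact mem_insert_of_mem _ htb
    obtain ⟨j, rfl⟩ := ht
    exact ⟨j, hat, htW⟩
  choose U hUopen hUinv hUVeq using fun j => hme.topometric (V j) (hVopen j)
  have hUlip : ∀ j (a b : A), U j a ≤ d a b + U j b := fun j a b =>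
    (grey_le d hme.d_nonneg hme.d_triangle (U j) (hUinv j) a b).trans (min_le_right _ _)
  have hUlim : ∀ (W : Set A), IsOpen W → ∀ (u : ℕ → A) (a : A),
      (∀ ε : ℝ, 0 < ε → ∃ N, ∀ n ≥ N, d (u n) a < ε) → a ∈ W → ∃ n, u n ∈ W := by
    intro W hW u a hu ha
    obtain ⟨UW, hUWopen, hUWinv, rfl⟩ := hme.topometric W hW
    simp only [mem_setOf_eq] at ha
    obtain ⟨N, hN⟩ := hu (1 - UW a) (by linarith)
    have hlip : UW (u N) ≤ d (u N) a + UW a :=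
      (grey_le d hme.d_nonneg hme.d_triangle UW hUWinv (u N) a).trans (min_le_right _ _)
    have hNN := hN N le_rfl
    exact ⟨N, by simp only [mem_setOf_eq]; linarith⟩
  have hOiopen : ∀ i : ℕ, IsOpen {a : A | (h (p a)).1 i} :=
    fun i => continuous_Prop.mp ((continuous_apply i).comp
      (continuous_subtype_val.comp (h.continuous.comp hme.proj_cont)))
  have hAsubOpen : ∀ c : Lc, IsOpen {a : A | satC c (eMap h U p a)} := by
    intro c
    have heq : {a : A | satC c (eMap h U p a)} =
        (⋂ i ∈ {i | i ∈ c.1}, {a : A | (h (p a)).1 i}) ∩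
        ⋂ kq ∈ {kq | kq ∈ c.2}, {a : A | U kq.1 a < (kq.2 : ℝ)} := by
      ext a
      simp only [mem_setOf_eq, mem_inter_iff, mem_iInter, satC, eMap]
    rw [heq]
    exact (c.1.finite_toSet.isOpen_biInter fun i _ => hOiopen i).inter
      (c.2.finite_toSet.isOpen_biInter fun kq _ => hUopen kq.1 _)
  have hSatTopen : ∀ c : Lc, IsOpen {z : Tz | satC c z} := by
    intro c
    have heq : {z : Tz | satC c z} =
        (⋂ i ∈ {i | i ∈ c.1}, {z : Tz | z.1 i}) ∩
        ⋂ kq ∈ {kq | kq ∈ c.2}, {z : Tz | z.2 kq} := by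
      ext z
      simp only [mem_setOf_eq, mem_inter_iff, mem_iInter, satC]
    rw [heq]
    refine (c.1.finite_toSet.isOpen_biInter fun i _ => ?_).inter
      (c.2.finite_toSet.isOpen_biInter fun kq _ => ?_)
    · exact continuous_Prop.mp ((continuous_apply i).comp continuous_fst)
    · exact continuous_Prop.mp ((continuous_apply kq).comp continuous_snd)
  have hGex : ∀ c : Lc, ∃ G : Set (ℕ → Prop), IsOpen G ∧
      Subtype.val ⁻¹' G = h '' (p '' {a : A | satC c (eMap h U p a)}) :=
    fun c => IsInducing.subtypeVal.isOpen_iff.mp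
      (h.isOpenMap _ (hme.proj_open _ (hAsubOpen c)))
  choose G hGopen hGspec using hGex
  have hGmem : ∀ (c : Lc) (x : ℕ → Prop) (hx : x ∈ S),
      x ∈ G c ↔ ∃ a : A, satC c (eMap h U p a) ∧ p a = h.symm ⟨x, hx⟩ := by
    intro c x hx
    have hiff : x ∈ G c ↔ (⟨x, hx⟩ : ↥S) ∈ h '' (p '' {a : A | satC c (eMap h U p a)}) := by
      rw [← hGspec c]; exact Iff.rfl
    rw [hiff]
    constructor
    · rintro ⟨y, ⟨a, ha, rfl⟩, hyx⟩
      refine ⟨a, ha, ?_⟩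
      rw [← hyx, h.symm_apply_apply]
    · rintro ⟨a, ha, hpa⟩
      exact ⟨p a, ⟨a, ha, rfl⟩, by rw [hpa, h.apply_symm_apply]⟩
  have hrpos : ∀ n : ℕ, (0 : ℝ) < (2⁻¹ : ℝ) ^ n := fun n => pow_pos (by norm_num) n
  have hsmall : ∀ (n : ℕ) (a : A), ∃ j, a ∈ V j ∧ smallP d p V n j := by
    intro n a
    obtain ⟨W, hWopen, hWeq⟩ := IsInducing.subtypeVal.isOpen_iff.mp (hme.d_open _ (hrpos n))
    have hmem : ((a, a) : A × A) ∈ W := by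
      have h1 : (⟨(a, a), rfl⟩ : {q : A × A // p q.1 = p q.2}) ∈ Subtype.val ⁻¹' W :=
        (Set.ext_iff.mp hWeq ⟨(a, a), rfl⟩).mpr
          (by show d a a < _; rw [hme.d_self]; exact hrpos n)
      exact h1
    obtain ⟨W1, W2, hW1, hW2, ha1, ha2, hsub⟩ := isOpen_prod_iff.mp hWopen a a hmem
    obtain ⟨j, haj, hjsub⟩ := hVbasis (W1 ∩ W2) (hW1.inter hW2) a ⟨ha1, ha2⟩
    refine ⟨j, haj, fun b b' hb hb' hpe => ?_⟩
    have h2 : (⟨(b, b'), hpe⟩ : {q : A × A // p q.1 = p q.2}) ∈ Subtype.val ⁻¹' W :=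
      hsub ⟨(hjsub hb).1, (hjsub hb').2⟩
    exact (Set.ext_iff.mp hWeq ⟨(b, b'), hpe⟩).mp h2
  obtain ⟨E, hEpi, hErange⟩ : ∃ E : Set Tz, IsPi02 E ∧ Set.range (eMap h U p) = E := by
    refine ⟨{z : Tz | z.1 ∈ S} ∩
      (⋂ kq : ℕ × ℚ, ({z : Tz | z.2 kq}ᶜ ∪
        ⋃ (q' : ℚ) (_ : q' < kq.2), {z : Tz | z.2 (kq.1, q')})) ∩
      (⋂ i : ℕ, ({z : Tz | z.1 i}ᶜ ∪
        ⋃ (kq : ℕ × ℚ) (_ : (kq.2 : ℝ) < 1 ∧ ∀ a ∈ V kq.1, (h (p a)).1 i),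
          {z : Tz | z.2 kq})) ∩
      (⋂ w : ℕ × Lc, ({z : Tz | satC w.2 z}ᶜ ∪
        ⋃ (t : Lc × ℕ × ℚ) (_ : extC w.2 t.1 ∧ (t.2.1, t.2.2) ∈ t.1.2 ∧
            ((t.2.2 : ℚ) : ℝ) < 1 ∧ smallP d p V w.1 t.2.1),
          {z : Tz | satC t.1 z ∧ z.1 ∈ G t.1})) ∩
      (⋂ w : (ℕ × ℚ) × ℕ × Lc × ℕ × ℚ,
        ((if (w.2.2.2.1, w.2.2.2.2) ∈ w.2.2.1.2 ∧ ((w.2.2.2.2 : ℚ) : ℝ) < 1 ∧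
              smallP d p V w.2.1 w.2.2.2.1
          then {z : Tz | satC w.2.2.1 z ∧
                z.1 ∈ G (w.2.2.1.1, (w.1.1, w.1.2 - 3 * (2⁻¹ : ℚ) ^ w.2.1) :: w.2.2.1.2)}ᶜ
          else univ) ∪
         (if (w.2.2.2.1, w.2.2.2.2) ∈ w.2.2.1.2 ∧ ((w.2.2.2.2 : ℚ) : ℝ) < 1 ∧
              smallP d p V w.2.1 w.2.2.2.1
          then {z : Tz | z.2 w.1}
          else (∅ : Set Tz)))), ?_, ?_⟩
    · refine isPi02_inter (isPi02_inter (isPi02_inter (isPi02_inter ?_ ?_) ?_) ?_) ?_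
      · exact isPi02_preimage continuous_fst hSpi
      · exact isPi02_iInter
          (fun kq => (continuous_Prop.mp ((continuous_apply kq).comp continuous_snd)).isClosed_compl)
          (fun kq => isOpen_iUnion fun q' => isOpen_iUnion fun _ =>
            continuous_Prop.mp ((continuous_apply (kq.1, q')).comp continuous_snd))
      · exact isPi02_iInter
          (fun i => (continuous_Prop.mp ((continuous_apply i).comp continuous_fst)).isClosed_compl)
          (fun i => isOpen_iUnion fun kq => isOpen_iUnion fun _ =>
            continuous_Prop.mp ((continuous_apply kq).comp continuous_snd))
      · exact isPi02_iInter (fun w => (hSatTopen w.2).isClosed_compl)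
          (fun w => isOpen_iUnion fun t => isOpen_iUnion fun _ =>
            (hSatTopen t.1).inter ((hGopen t.1).preimage continuous_fst))
      · refine isPi02_iInter (fun w => ?_) (fun w => ?_)
        · split_ifs with hg
          · exact ((hSatTopen _).inter ((hGopen _).preimage continuous_fst)).isClosed_compl
          · exact isClosed_univ
        · split_ifs with hg
          · exact continuous_Prop.mp ((continuous_apply w.1).comp continuous_snd)
          · exact isOpen_empty
    · apply Subset.antisymm
      · rintro z ⟨a, rfl⟩
        refine ⟨⟨⟨⟨?_, ?_⟩, ?_⟩, ?_⟩, ?_⟩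
        · exact (h (p a)).2
        · refine mem_iInter.mpr fun kq => ?_
          by_cases hk : U kq.1 a < (kq.2 : ℝ)
          · obtain ⟨q', hq1, hq2⟩ := exists_rat_btwn hk
            exact mem_union_right _ (mem_iUnion.mpr ⟨q',
              mem_iUnion.mpr ⟨by exact_mod_cast hq2, hq1⟩⟩)
          · exact mem_union_left _ hk
        · refine mem_iInter.mpr fun i => ?_
          by_cases hi : (h (p a)).1 i
          · obtain ⟨j, haj, hsub⟩ := hVbasis _ (hOiopen i) a hi
            have hUj : U j a < 1 := by rw [hUVeq] at haj; exact haj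
            obtain ⟨q, hq1, hq2⟩ := exists_rat_btwn hUj
            exact mem_union_right _ (mem_iUnion.mpr ⟨(j, q),
              mem_iUnion.mpr ⟨⟨hq2, fun b hb => hsub hb⟩, hq1⟩⟩)
          · exact mem_union_left _ hi
        · refine mem_iInter.mpr fun w => ?_
          by_cases hc : satC w.2 (eMap h U p a)
          · obtain ⟨j, haj, hjsm⟩ := hsmall w.1 a
            have hUj : U j a < 1 := by rw [hUVeq] at haj; exact haj
            obtain ⟨q, hq1, hq2⟩ := exists_rat_btwn hUj
            have hsat' : satC (w.2.1, (j, q) :: w.2.2) (eMap h U p a) := by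
              refine ⟨hc.1, fun kq hkq => ?_⟩
              rcases List.mem_cons.mp hkq with rfl | hh
              · exact hq1
              · exact hc.2 kq hh
            refine mem_union_right _ (mem_iUnion.mpr ⟨((w.2.1, (j, q) :: w.2.2), j, q),
              mem_iUnion.mpr ⟨⟨⟨fun i hi => hi, fun kq hkq => List.mem_cons_of_mem _ hkq⟩,
                List.mem_cons_self, hq2, hjsm⟩, hsat', ?_⟩⟩)
            exact (hGmem _ _ (h (p a)).2).mpr ⟨a, hsat', (h.symm_apply_apply (p a)).symm⟩
          · exact mem_union_left _ hc
        · refine mem_iInter.mpr fun w => ?_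
          by_cases hg : (w.2.2.2.1, w.2.2.2.2) ∈ w.2.2.1.2 ∧ ((w.2.2.2.2 : ℚ) : ℝ) < 1 ∧
              smallP d p V w.2.1 w.2.2.2.1
          · rw [if_pos hg, if_pos hg]
            by_cases hkq : U w.1.1 a < ((w.1.2 : ℚ) : ℝ)
            · exact mem_union_right _ hkq
            · refine mem_union_left _ ?_
              rintro ⟨hsat, hmemG⟩
              obtain ⟨b, hbsat, hbp⟩ := (hGmem _ _ (h (p a)).2).mp hmemG
              have hUkb : U w.1.1 b < ((w.1.2 - 3 * (2⁻¹ : ℚ) ^ w.2.1 : ℚ) : ℝ) :=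
                hbsat.2 _ (List.mem_cons_self)
              have haVj : a ∈ V w.2.2.2.1 := by
                rw [hUVeq]
                exact lt_trans (hsat.2 _ hg.1) hg.2.1
              have hbVj : b ∈ V w.2.2.2.1 := by
                rw [hUVeq]
                exact lt_trans (hbsat.2 _ (List.mem_cons_of_mem _ hg.1)) hg.2.1
              have hpab : p b = p a := hbp.trans (h.symm_apply_apply (p a))
              have hdab : d a b < (2⁻¹ : ℝ) ^ w.2.1 := hg.2.2 a b haVj hbVj hpab.symm
              have hlipab := hUlip w.1.1 a b
              apply hkq
              push_cast at hUkb
              have hr := hrpos w.2.1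
              linarith
          · rw [if_neg hg, if_neg hg]
            exact mem_union_left _ (mem_univ _)
      · intro z hz
        obtain ⟨⟨⟨⟨hz0, hz2⟩, hz3⟩, hzC⟩, hzN⟩ := hz
        have hstep : ∀ (n : ℕ) (c : Lc), ∃ out : Lc × ℕ × ℚ, satC c z →
            extC c out.1 ∧ (out.2.1, out.2.2) ∈ out.1.2 ∧ ((out.2.2 : ℚ) : ℝ) < 1 ∧
            smallP d p V n out.2.1 ∧ satC out.1 z ∧ z.1 ∈ G out.1 := by
          intro n c
          by_cases hc : satC c z
          · rcases mem_iInter.mp hzC (n, c) with hbad | hgood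
            · exact absurd hc hbad
            · obtain ⟨t, ht⟩ := mem_iUnion.mp hgood
              obtain ⟨hgd, hmem⟩ := mem_iUnion.mp ht
              exact ⟨t, fun _ => ⟨hgd.1, hgd.2.1, hgd.2.2.1, hgd.2.2.2, hmem.1, hmem.2⟩⟩
          · exact ⟨(c, 0, 0), fun hcc => absurd hcc hc⟩
        choose step hstepspec using hstep
        haveI : Denumerable (ℕ × ℚ) := Denumerable.ofEncodableOfInfinite _
        have henum : ∀ s : ℕ × ℚ, ∃ n : ℕ, (Denumerable.eqv (ℕ × ℚ)).symm n = s := fun s =>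
          ⟨Denumerable.eqv (ℕ × ℚ) s, by simp⟩
        set enum : ℕ → ℕ × ℚ := fun n => (Denumerable.eqv (ℕ × ℚ)).symm n with henumdef
        set cc : ℕ → Lc := fun n =>
          Nat.rec (motive := fun _ => Lc) (([], []) : Lc)
            (fun m prev => (step m (insD z (enum m) prev)).1) n with hccdef
        have hccsucc : ∀ n, cc (n + 1) = (step n (insD z (enum n) (cc n))).1 := fun n => rfl
        have hccsat : ∀ n, satC (cc n) z := by
          intro n
          induction n with
          | zero => exact ⟨fun i hi => absurd hi List.not_mem_nil,
              fun kq hkq => absurd hkq List.not_mem_nil⟩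
          | succ m ih =>
            rw [hccsucc m]
            exact (hstepspec m _ (insD_sat z (enum m) (cc m) ih)).2.2.2.2.1
        have hspec := fun n =>
          hstepspec n (insD z (enum n) (cc n)) (insD_sat z (enum n) (cc n) (hccsat n))
        have hccext : ∀ n, extC (cc n) (cc (n + 1)) := fun n => by
          rw [hccsucc n]
          exact extC_trans (insD_ext z (enum n) (cc n)) (hspec n).1
        have hccle : ∀ {m n : ℕ}, m ≤ n → extC (cc m) (cc n) := by
          intro m n hmn
          induction hmn with
          | refl => exact extC_refl _
          | step hmn' ih => exact extC_trans ih (hccext _)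
        set jj : ℕ → ℕ := fun n => (step n (insD z (enum n) (cc n))).2.1 with hjjdef
        set qq : ℕ → ℚ := fun n => (step n (insD z (enum n) (cc n))).2.2 with hqqdef
        have hjq : ∀ n, (jj n, qq n) ∈ (cc (n + 1)).2 := fun n => by
          rw [hccsucc n]; exact (hspec n).2.1
        have hq1 : ∀ n, ((qq n : ℚ) : ℝ) < 1 := fun n => (hspec n).2.2.1
        have hsm : ∀ n, smallP d p V n (jj n) := fun n => (hspec n).2.2.2.1
        have hGn : ∀ n, z.1 ∈ G (cc (n + 1)) := fun n => by
          rw [hccsucc n]; exact (hspec n).2.2.2.2.2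
        have haex : ∀ n, ∃ a : A, satC (cc (n + 1)) (eMap h U p a) ∧ p a = h.symm ⟨z.1, hz0⟩ :=
          fun n => (hGmem (cc (n + 1)) z.1 hz0).mp (hGn n)
        choose aa haasat haap using haex
        have hVmem : ∀ n m, n ≤ m → aa m ∈ V (jj n) := by
          intro n m hnm
          have h1 : (jj n, qq n) ∈ (cc (m + 1)).2 :=
            (hccle (Nat.succ_le_succ hnm)).2 _ (hjq n)
          have h2 : U (jj n) (aa m) < ((qq n : ℚ) : ℝ) := (haasat m).2 _ h1
          rw [hUVeq]
          exact lt_trans h2 (hq1 n)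
        have hcauchy : ∀ ε : ℝ, 0 < ε → ∃ N, ∀ m ≥ N, ∀ m' ≥ N, d (aa m) (aa m') < ε := by
          intro ε hε
          obtain ⟨n, hn⟩ := exists_pow_lt_of_lt_one hε (by norm_num : (2⁻¹ : ℝ) < 1)
          exact ⟨n, fun m hm m' hm' => lt_trans
            (hsm n (aa m) (aa m') (hVmem n m hm) (hVmem n m' hm')
              (by rw [haap m, haap m'])) hn⟩
        obtain ⟨a0, ha0⟩ := hme.complete aa hcauchy
        have hUle : ∀ (k : ℕ) (s : ℝ), (∃ N, ∀ m ≥ N, U k (aa m) < s) → U k a0 ≤ s := by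
          rintro k s ⟨N, hN⟩
          by_contra hlt
          push_neg at hlt
          obtain ⟨M, hM⟩ := ha0 (U k a0 - s) (by linarith)
          have h1 := hUlip k a0 (aa (max N M))
          have h2 := hN (max N M) (le_max_left _ _)
          have h3 := hM (max N M) (le_max_right _ _)
          rw [hme.d_symm] at h1
          linarith
        have hdatum : ∀ kq : ℕ × ℚ, z.2 kq → ∃ N, ∀ m ≥ N, U kq.1 (aa m) < (kq.2 : ℝ) := by
          intro kq hkq
          obtain ⟨n, hn⟩ := henum kq
          refine ⟨n, fun m hm => ?_⟩
          have hmem0 : kq ∈ (insD z (enum n) (cc n)).2 := by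
            have : enum n = kq := hn
            rw [this]
            exact insD_pos z kq (cc n) hkq
          have hmem1 : kq ∈ (cc (n + 1)).2 := by
            rw [hccsucc n]; exact (hspec n).1.2 _ hmem0
          have hmem2 : kq ∈ (cc (m + 1)).2 := (hccle (Nat.succ_le_succ hm)).2 _ hmem1
          exact (haasat m).2 _ hmem2
        refine ⟨a0, ?_⟩
        have hfst : (eMap h U p a0).1 = z.1 := by
          funext i
          apply propext
          constructor
          · intro hi
            obtain ⟨n, hn⟩ := hUlim _ (hOiopen i) aa a0 ha0 hi
            have h1 : (h (h.symm ⟨z.1, hz0⟩)).1 i := by rw [← haap n]; exact hn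
            rw [h.apply_symm_apply] at h1
            exact h1
          · intro hi
            rcases mem_iInter.mp hz3 i with hbad | hgood
            · exact absurd hi hbad
            · obtain ⟨kq, hkq⟩ := mem_iUnion.mp hgood
              obtain ⟨hgd, hz2kq⟩ := mem_iUnion.mp hkq
              have hub : U kq.1 a0 ≤ (kq.2 : ℝ) := hUle kq.1 _ (hdatum kq hz2kq)
              have ha0V : a0 ∈ V kq.1 := by
                rw [hUVeq]; exact lt_of_le_of_lt hub hgd.1
              exact hgd.2 a0 ha0V
        have hsnd : (eMap h U p a0).2 = z.2 := by
          funext kq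
          apply propext
          constructor
          · intro hlt0
            have hlt : U kq.1 a0 < (kq.2 : ℝ) := hlt0
            by_contra hnz
            obtain ⟨n0, hn0⟩ := exists_pow_lt_of_lt_one
              (show (0 : ℝ) < ((kq.2 : ℝ) - U kq.1 a0) / 8 by linarith)
              (by norm_num : (2⁻¹ : ℝ) < 1)
            obtain ⟨M, hM⟩ := ha0 (((kq.2 : ℝ) - U kq.1 a0) / 8) (by linarith)
            have hgd : (jj (max n0 M), qq (max n0 M)) ∈ (cc (max n0 M + 1)).2 ∧
                ((qq (max n0 M) : ℚ) : ℝ) < 1 ∧ smallP d p V (max n0 M) (jj (max n0 M)) :=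
              ⟨hjq (max n0 M), hq1 (max n0 M), hsm (max n0 M)⟩
            have hw := mem_iInter.mp hzN (kq, max n0 M, cc (max n0 M + 1),
              (jj (max n0 M), qq (max n0 M)))
            rw [if_pos hgd, if_pos hgd] at hw
            rcases hw with hcl | hop
            · apply hcl
              refine ⟨hccsat (max n0 M + 1), ?_⟩
              refine (hGmem _ _ hz0).mpr ⟨aa (max n0 M), ⟨(haasat (max n0 M)).1, ?_⟩,
                haap (max n0 M)⟩
              intro kq' hkq'
              rcases List.mem_cons.mp hkq' with rfl | hh
              · show U kq.1 (aa (max n0 M)) < ((kq.2 - 3 * (2⁻¹ : ℚ) ^ (max n0 M) : ℚ) : ℝ)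
                have h1 := hUlip kq.1 (aa (max n0 M)) a0
                have h2 := hM (max n0 M) (le_max_right _ _)
                have h3 : (2⁻¹ : ℝ) ^ (max n0 M) ≤ (2⁻¹ : ℝ) ^ n0 :=
                  pow_le_pow_of_le_one (by norm_num) (by norm_num) (le_max_left _ _)
                push_cast
                linarith
              · exact (haasat (max n0 M)).2 _ hh
            · exact hnz hop
          · intro hzkq
            rcases mem_iInter.mp hz2 kq with hbad | hgood
            · exact absurd hzkq hbad
            · obtain ⟨q', hq'⟩ := mem_iUnion.mp hgood
              obtain ⟨hq'lt, hzq'⟩ := mem_iUnion.mp hq'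
              have hub : U kq.1 a0 ≤ (q' : ℝ) := hUle kq.1 _ (hdatum (kq.1, q') hzq')
              show U kq.1 a0 < (kq.2 : ℝ)
              calc U kq.1 a0 ≤ (q' : ℝ) := hub
                _ < (kq.2 : ℝ) := by exact_mod_cast hq'lt
        exact Prod.ext_iff.mpr ⟨hfst, hsnd⟩
  have hecont : Continuous (eMap h U p) := by
    unfold eMap
    exact Continuous.prodMk
      (continuous_subtype_val.comp (h.continuous.comp hme.proj_cont))
      (continuous_pi fun kq => continuous_Prop.mpr (hUopen kq.1 _))
  have hinj : Function.Injective (eMap h U p) := by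
    intro a b hab
    by_contra hne
    have hd0' : 0 < d a b :=
      lt_of_le_of_ne (hme.d_nonneg a b) fun hh => hne (hme.d_eq_zero a b hh.symm)
    obtain ⟨n, hn⟩ := exists_pow_lt_of_lt_one hd0' (by norm_num : (2⁻¹ : ℝ) < 1)
    obtain ⟨j, haj, hjs⟩ := hsmall n a
    have hUj : U j a < 1 := by rw [hUVeq] at haj; exact haj
    obtain ⟨q, hq1, hq2⟩ := exists_rat_btwn hUj
    have hbq : U j b < (q : ℝ) := by
      have h1 : (eMap h U p a).2 (j, q) := hq1
      rw [hab] at h1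
      exact h1
    have hbj : b ∈ V j := by rw [hUVeq]; exact lt_trans hbq hq2
    have hpp : p a = p b := by
      have h1 : (eMap h U p a).1 = (eMap h U p b).1 := by rw [hab]
      exact h.injective (Subtype.ext h1)
    linarith [hjs a b haj hbj hpp, hn]
  have hemb : IsEmbedding (eMap h U p) := by
    refine ⟨⟨le_antisymm (continuous_iff_le_induced.mp hecont) ?_⟩, hinj⟩
    rw [TopologicalSpace.le_def]
    intro W hW
    refine isOpen_induced_iff.mpr
      ⟨⋃ (kq : ℕ × ℚ) (_ : (kq.2 : ℝ) < 1 ∧ V kq.1 ⊆ W), {z : Tz | z.2 kq}, ?_, ?_⟩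
    · exact isOpen_iUnion fun kq => isOpen_iUnion fun _ =>
        continuous_Prop.mp ((continuous_apply kq).comp continuous_snd)
    · ext a
      simp only [mem_preimage, mem_iUnion, mem_setOf_eq]
      constructor
      · rintro ⟨kq, ⟨hlt1, hsub⟩, hlt⟩
        refine hsub ?_
        rw [hUVeq]
        exact lt_trans hlt hlt1
      · intro haW
        obtain ⟨j, haj, hsub⟩ := hVbasis W hW a haW
        have hUj : U j a < 1 := by rw [hUVeq] at haj; exact haj
        obtain ⟨q, hq1, hq2⟩ := exists_rat_btwn hUj
        exact ⟨(j, q), ⟨hq2, hsub⟩, hq1⟩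
  haveI : Denumerable (ℕ ⊕ ℕ × ℚ) := Denumerable.ofEncodableOfInfinite _
  let φ : Tz ≃ₜ (ℕ → Prop) :=
    Homeomorph.sumArrowHomeomorphProdArrow.symm.trans
      (Homeomorph.piCongrLeft (Y := fun _ => Prop) (Denumerable.eqv (ℕ ⊕ ℕ × ℚ)))
  refine ⟨φ '' E, isPi02_image φ hEpi, ⟨?_⟩⟩
  exact (hemb.toHomeomorph.trans (Homeomorph.setCongr hErange)).trans (φ.image E)
end
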